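/- arXiv:math/0604331 — 4 statements merged into one kernel-verified Lean document; each statement's English description precedes it below -/
import Mathlib

section
/- If β(a,b) and β(c, a+b-c) denote Beta-distributed random variables and the variables on the left are independent, then β(a,b)·β(c,a-c) has the same distribution as β(c, a+b-c), for parameters 0 < c < a and b > 0. -/
open MeasureTheory ProbabilityTheory Real Set

/-- The Beta distribution with parameters `a`, `b`, given by its density
`Γ(a+b)/(Γ(a)Γ(b)) x^(a-1) (1-x)^(b-1)` on `(0,1)`. -/
noncomputable def betaMeasure (a b : ℝ) : Measure ℝ :=
  (volume.restrict (Set.Ioo (0 : ℝ) 1)).withDensity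
    (fun x => ENNReal.ofReal (Real.Gamma (a + b) / (Real.Gamma a * Real.Gamma b)
      * x ^ (a - 1) * (1 - x) ^ (b - 1)))

open scoped ENNReal

lemma complex_beta_eq (p q : ℝ) (hp : 0 < p) (hq : 0 < q) :
    Complex.betaIntegral p q = Complex.ofReal (Real.Gamma p * Real.Gamma q / Real.Gamma (p+q)) := by
  have h := Complex.Gamma_mul_Gamma_eq_betaIntegral (s := p) (t := q) (by simpa) (by simpa)
  rw [← Complex.ofReal_add, Complex.Gamma_ofReal, Complex.Gamma_ofReal, Complex.Gamma_ofReal] at h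
  have hne : (Real.Gamma (p+q) : ℂ) ≠ 0 := by
    exact_mod_cast (Real.Gamma_pos_of_pos (by positivity)).ne'
  rw [Complex.ofReal_div, Complex.ofReal_mul, eq_div_iff hne, mul_comm, ← h]

lemma beta_lintegral (p q : ℝ) (hp : 0 < p) (hq : 0 < q) :
    ∫⁻ x in Ioo (0:ℝ) 1, ENNReal.ofReal (x^(p-1)*(1-x)^(q-1)) =
      ENNReal.ofReal (Real.Gamma p * Real.Gamma q / Real.Gamma (p+q)) := by
  have hcongr : EqOn (fun x : ℝ => (x:ℂ)^(p-1:ℂ) * (1-(x:ℂ))^(q-1:ℂ))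
      (fun x : ℝ => ((x^(p-1)*(1-x)^(q-1) : ℝ) : ℂ)) (Ioc 0 1) := by
    intro x hx
    have h2 : ((1:ℂ) - x) = ((1 - x : ℝ) : ℂ) := by push_cast; ring
    have hp1 : ((p:ℂ) - 1) = ((p - 1 : ℝ) : ℂ) := by push_cast; ring
    have hq1 : ((q:ℂ) - 1) = ((q - 1 : ℝ) : ℂ) := by push_cast; ring
    show (x:ℂ)^((p:ℂ)-1) * ((1:ℂ)-(x:ℂ))^((q:ℂ)-1) = _
    rw [h2, hp1, hq1, ← Complex.ofReal_cpow hx.1.le,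
      ← Complex.ofReal_cpow (by linarith [hx.2] : (0:ℝ) ≤ 1 - x), ← Complex.ofReal_mul]
  have hic := Complex.betaIntegral_convergent (u := (p:ℂ)) (v := (q:ℂ)) (by simpa) (by simpa)
  rw [intervalIntegrable_iff_integrableOn_Ioc_of_le zero_le_one] at hic
  have hic' : IntegrableOn (fun x : ℝ => ((x^(p-1)*(1-x)^(q-1) : ℝ) : ℂ)) (Ioc 0 1) :=
    hic.congr_fun hcongr measurableSet_Ioc
  have hfint : IntegrableOn (fun x : ℝ => x^(p-1)*(1-x)^(q-1)) (Ioc 0 1) := by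
    simpa [IntegrableOn] using hic'.re
  have hval : ∫ x in Ioc (0:ℝ) 1, x^(p-1)*(1-x)^(q-1) =
      Real.Gamma p * Real.Gamma q / Real.Gamma (p+q) := by
    have h1 : Complex.betaIntegral p q
        = ∫ x in Ioc (0:ℝ) 1, ((x^(p-1)*(1-x)^(q-1) : ℝ) : ℂ) := by
      rw [Complex.betaIntegral, intervalIntegral.integral_of_le zero_le_one]
      exact setIntegral_congr_fun measurableSet_Ioc hcongr
    rw [complex_beta_eq p q hp hq] at h1
    have h2 : ∫ x in Ioc (0:ℝ) 1, ((x^(p-1)*(1-x)^(q-1) : ℝ):ℂ)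
        = ((∫ x in Ioc (0:ℝ) 1, x^(p-1)*(1-x)^(q-1) : ℝ) : ℂ) := integral_ofReal
    rw [h2] at h1
    exact_mod_cast h1.symm
  rw [← ofReal_integral_eq_lintegral_ofReal (hfint.mono_set Ioo_subset_Ioc_self)]
  · rw [← integral_Ioc_eq_integral_Ioo, hval]
  · filter_upwards [self_mem_ae_restrict measurableSet_Ioo] with x hx
    have h1 : (0:ℝ) ≤ x := hx.1.le
    have h2 : (0:ℝ) ≤ 1 - x := by linarith [hx.2]
    positivity

lemma lintegral_affine {k r : ℝ} (hr : 0 < r) (f : ℝ → ℝ≥0∞) (hf : Measurable f) :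
    ∫⁻ x in Ioo k (k+r), f x = ENNReal.ofReal r * ∫⁻ t in Ioo (0:ℝ) 1, f (k + r*t) := by
  have hφ : Measurable (fun t : ℝ => k + r*t) := (measurable_id.const_mul r).const_add k
  have hmap : Measure.map (fun t : ℝ => k + r*t) volume
      = ENNReal.ofReal r⁻¹ • volume := by
    have h : (fun t : ℝ => k + r*t) = (fun x : ℝ => k + x) ∘ (r * ·) := rfl
    rw [h, ← Measure.map_map (measurable_const_add k) (by fun_prop : Measurable fun x : ℝ => r * x),
      Real.map_volume_mul_left hr.ne', Measure.map_smul,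
      map_add_left_eq_self volume k, abs_of_pos (inv_pos.mpr hr)]
  have hpre : (fun t : ℝ => k + r*t) ⁻¹' (Ioo k (k+r)) = Ioo (0:ℝ) 1 := by
    ext t
    simp only [mem_preimage, mem_Ioo]
    constructor
    · rintro ⟨h1, h2⟩
      constructor <;> nlinarith
    · rintro ⟨h1, h2⟩
      constructor <;> nlinarith
  have key : ∫⁻ t in Ioo (0:ℝ) 1, f (k + r*t)
      = ENNReal.ofReal r⁻¹ * ∫⁻ x in Ioo k (k+r), f x := by
    rw [← hpre, ← lintegral_map hf hφ, ← Measure.restrict_map hφ measurableSet_Ioo, hmap,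
      Measure.restrict_smul, lintegral_smul_measure, smul_eq_mul]
  rw [key, ← mul_assoc, ← ENNReal.ofReal_mul hr.le, mul_inv_cancel₀ hr.ne', ENNReal.ofReal_one,
    one_mul]

lemma beta_lintegral_shifted (p q z : ℝ) (hp : 0 < p) (hq : 0 < q) (hz : z ∈ Ioo (0:ℝ) 1) :
    ∫⁻ x in Ioo z 1, ENNReal.ofReal ((x-z)^(p-1)*(1-x)^(q-1)) =
      ENNReal.ofReal ((1-z)^(p+q-1) * (Real.Gamma p * Real.Gamma q / Real.Gamma (p+q))) := by
  have h1z : (0:ℝ) < 1 - z := by linarith [hz.2]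
  have hf : Measurable (fun x : ℝ => ENNReal.ofReal ((x-z)^(p-1)*(1-x)^(q-1))) := by
    fun_prop
  have h1 : Ioo z 1 = Ioo z (z + (1-z)) := by ring_nf
  rw [h1, lintegral_affine h1z _ hf]
  have h2 : ∫⁻ t in Ioo (0:ℝ) 1, ENNReal.ofReal ((z + (1-z)*t - z)^(p-1)*(1-(z+(1-z)*t))^(q-1))
      = ∫⁻ t in Ioo (0:ℝ) 1, ENNReal.ofReal ((1-z)^(p-1)*(1-z)^(q-1)) *
          ENNReal.ofReal (t^(p-1)*(1-t)^(q-1)) := by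
    apply setLIntegral_congr_fun measurableSet_Ioo
    intro t ht
    beta_reduce
    have e1 : z + (1-z)*t - z = (1-z)*t := by ring
    have e2 : 1 - (z + (1-z)*t) = (1-z)*(1-t) := by ring
    rw [e1, e2, Real.mul_rpow h1z.le ht.1.le, Real.mul_rpow h1z.le (by linarith [ht.2]),
      ← ENNReal.ofReal_mul (by positivity)]
    ring_nf
  rw [h2, lintegral_const_mul _ (by fun_prop), beta_lintegral p q hp hq,
    ← ENNReal.ofReal_mul (by positivity), ← ENNReal.ofReal_mul (by positivity)]
  congr 1
  rw [show p + q - 1 = 1 + (p-1) + (q-1) by ring, Real.rpow_add h1z, Real.rpow_add h1z,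
    Real.rpow_one]
  ring

lemma rpow_algebra (C1 C2 a b c x z : ℝ) (hz : 0 < z) (hzx : z < x) (hx1 : x < 1) :
    (C1 * x^(a-1) * (1-x)^(b-1)) * x⁻¹ * (C2 * (z/x)^(c-1) * (1-(z/x))^(a-c-1))
      = (C1*C2*z^(c-1)) * ((x-z)^(a-c-1) * (1-x)^(b-1)) := by
  have hx0 : 0 < x := hz.trans hzx
  have h1 : (z/x)^(c-1) = z^(c-1) / x^(c-1) := Real.div_rpow hz.le hx0.le _
  have h2 : (1 - z/x) = (x-z)/x := by field_simp
  have h3 : ((x-z)/x)^(a-c-1) = (x-z)^(a-c-1) / x^(a-c-1) :=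
    Real.div_rpow (by linarith : (0:ℝ) ≤ x - z) hx0.le _
  have hxpow : x^(a-1) = x * (x^(c-1) * x^(a-c-1)) := by
    rw [show a - 1 = 1 + (c-1) + (a-c-1) by ring, Real.rpow_add hx0, Real.rpow_add hx0,
      Real.rpow_one, mul_assoc]
  have hc0 : x^(c-1) ≠ 0 := (Real.rpow_pos_of_pos hx0 _).ne'
  have hac0 : x^(a-c-1) ≠ 0 := (Real.rpow_pos_of_pos hx0 _).ne'
  rw [h1, h2, h3, hxpow]
  field_simp

theorem beta_mul_beta {Ω : Type*} [MeasurableSpace Ω] (μ : Measure Ω)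
    [IsProbabilityMeasure μ] (a b c : ℝ) (hc : 0 < c) (hca : c < a) (hb : 0 < b)
    (X Y : Ω → ℝ) (hX : Measurable X) (hY : Measurable Y)
    (hXlaw : μ.map X = _root_.betaMeasure a b) (hYlaw : μ.map Y = _root_.betaMeasure c (a - c))
    (hindep : IndepFun X Y μ) :
    μ.map (fun ω => X ω * Y ω) = _root_.betaMeasure c (a + b - c) := by
  have ha : 0 < a := hc.trans hca
  have hac : 0 < a - c := by linarith
  have habc : 0 < a + b - c := by linarith
  -- Gamma positivity
  have hGa := Real.Gamma_pos_of_pos ha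
  have hGb := Real.Gamma_pos_of_pos hb
  have hGc := Real.Gamma_pos_of_pos hc
  have hGac := Real.Gamma_pos_of_pos hac
  have hGab := Real.Gamma_pos_of_pos (by linarith : (0:ℝ) < a + b)
  have hGabc := Real.Gamma_pos_of_pos habc
  set f₁ : ℝ → ℝ≥0∞ := fun x => ENNReal.ofReal (Real.Gamma (a + b) /
    (Real.Gamma a * Real.Gamma b) * x ^ (a - 1) * (1 - x) ^ (b - 1)) with hf₁def
  set f₂ : ℝ → ℝ≥0∞ := fun x => ENNReal.ofReal (Real.Gamma (c + (a - c)) /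
    (Real.Gamma c * Real.Gamma (a - c)) * x ^ (c - 1) * (1 - x) ^ (a - c - 1)) with hf₂def
  set f₃ : ℝ → ℝ≥0∞ := fun x => ENNReal.ofReal (Real.Gamma (c + (a + b - c)) /
    (Real.Gamma c * Real.Gamma (a + b - c)) * x ^ (c - 1) * (1 - x) ^ (a + b - c - 1))
    with hf₃def
  have hf₁ : Measurable f₁ := by fun_prop
  have hf₂ : Measurable f₂ := by fun_prop
  have hν₁ : _root_.betaMeasure a b = (volume.restrict (Ioo (0:ℝ) 1)).withDensity f₁ := rfl
  have hν₂ : _root_.betaMeasure c (a - c) = (volume.restrict (Ioo (0:ℝ) 1)).withDensity f₂ := rfl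
  haveI : SFinite (_root_.betaMeasure c (a - c)) :=
    inferInstanceAs (SFinite (Measure.withDensity _ _))
  have hm : Measurable (fun p : ℝ × ℝ => p.1 * p.2) := measurable_fst.mul measurable_snd
  have hmain : μ.map (fun ω => X ω * Y ω)
      = ((_root_.betaMeasure a b).prod (_root_.betaMeasure c (a-c))).map (fun p : ℝ × ℝ => p.1 * p.2) := by
    rw [← hXlaw, ← hYlaw,
      ← (indepFun_iff_map_prod_eq_prod_map_map hX.aemeasurable hY.aemeasurable).1 hindep,
      Measure.map_map hm (hX.prodMk hY)]
    rfl
  rw [hmain]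
  ext s hs
  set ind : ℝ → ℝ≥0∞ := fun u => s.indicator (fun _ => (1:ℝ≥0∞)) u with hinddef
  have hindm : Measurable ind := measurable_const.indicator hs
  have hmul : Measurable fun p : ℝ×ℝ => ind (p.1*p.2) := hindm.comp hm
  -- the kernel with the order condition
  set K : ℝ × ℝ → ℝ≥0∞ := fun p => if p.2 < p.1 then f₂ (p.2/p.1) * ind p.2 else 0 with hKdef
  have hSm : MeasurableSet {p : ℝ × ℝ | p.2 < p.1} := measurableSet_lt measurable_snd measurable_fst
  have hKm : Measurable K := by
    apply Measurable.ite hSm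
    · exact (hf₂.comp (measurable_snd.div measurable_fst)).mul (hindm.comp measurable_snd)
    · exact measurable_const
  -- Step 1 : iterated integral form
  have hP : ((_root_.betaMeasure a b).prod (_root_.betaMeasure c (a-c))) ((fun p : ℝ×ℝ => p.1*p.2) ⁻¹' s)
      = ∫⁻ x in Ioo (0:ℝ) 1, f₁ x * ∫⁻ y in Ioo (0:ℝ) 1, f₂ y * ind (x*y) := by
    rw [← lintegral_indicator_one (hm hs)]
    have hpt : ∀ p : ℝ×ℝ, ((fun p : ℝ×ℝ => p.1*p.2) ⁻¹' s).indicator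
        (1 : ℝ×ℝ → ℝ≥0∞) p = ind (p.1 * p.2) := by
      intro p
      by_cases h : p.1 * p.2 ∈ s <;> simp [hinddef, h, Set.indicator_apply]
    rw [lintegral_congr hpt, lintegral_prod _ hmul.aemeasurable, hν₁, hν₂,
      lintegral_withDensity_eq_lintegral_mul _ hf₁
        (show Measurable fun x => ∫⁻ y, ind ((x, y).1 * (x, y).2)
            ∂((volume.restrict (Ioo (0:ℝ) 1)).withDensity f₂) from
          Measurable.lintegral_prod_right
            (show Measurable (Function.uncurry fun x y => ind (x * y)) from hmul))]
    apply lintegral_congr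
    intro x
    simp only [Pi.mul_apply]
    congr 1
    rw [lintegral_withDensity_eq_lintegral_mul _ hf₂
      (show Measurable fun y => ind ((x, y).1 * (x, y).2) from
        hindm.comp (measurable_const_mul x))]
    rfl
  rw [Measure.map_apply hm hs, hP]
  -- Step 2 : substitute in the inner integral
  have hInner : ∀ x ∈ Ioo (0:ℝ) 1, (∫⁻ y in Ioo (0:ℝ) 1, f₂ y * ind (x*y))
      = ENNReal.ofReal x⁻¹ * ∫⁻ z in Ioo (0:ℝ) 1, K (x, z) := by
    intro x hx
    have hx0 : 0 < x := hx.1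
    have hFm : Measurable (fun z : ℝ => f₂ (z/x) * ind z) :=
      (hf₂.comp (measurable_id.div_const x)).mul hindm
    have aff := lintegral_affine (k := 0) hx0 (fun z => f₂ (z/x) * ind z) hFm
    simp only [zero_add] at aff
    have aff2 : ∫⁻ z in Ioo (0:ℝ) x, f₂ (z/x) * ind z
        = ENNReal.ofReal x * ∫⁻ y in Ioo (0:ℝ) 1, f₂ y * ind (x*y) := by
      rw [aff]
      congr 1
      apply lintegral_congr
      intro t
      rw [mul_div_cancel_left₀ _ hx0.ne']
    have hIoo : ∫⁻ z in Ioo (0:ℝ) x, f₂ (z/x) * ind z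
        = ∫⁻ z in Ioo (0:ℝ) 1, K (x, z) := by
      rw [← lintegral_indicator measurableSet_Ioo, ← lintegral_indicator measurableSet_Ioo]
      apply lintegral_congr
      intro z
      by_cases h1 : z ∈ Ioo (0:ℝ) x
      · have h2 : z ∈ Ioo (0:ℝ) 1 := ⟨h1.1, h1.2.trans hx.2⟩
        rw [Set.indicator_of_mem h1, Set.indicator_of_mem h2, hKdef]
        simp only [if_pos h1.2]
      · by_cases h2 : z ∈ Ioo (0:ℝ) 1
        · have h3 : ¬ z < x := by
            intro h
            exact h1 ⟨h2.1, h⟩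
          rw [Set.indicator_of_notMem h1, Set.indicator_of_mem h2, hKdef]
          simp only [if_neg h3]
        · rw [Set.indicator_of_notMem h1, Set.indicator_of_notMem h2]
    rw [← hIoo, aff2, ← mul_assoc, ← ENNReal.ofReal_mul (by positivity),
      inv_mul_cancel₀ hx0.ne', ENNReal.ofReal_one, one_mul]
  -- Step 3 : rewrite and swap
  have hswap : (∫⁻ x in Ioo (0:ℝ) 1, f₁ x * ∫⁻ y in Ioo (0:ℝ) 1, f₂ y * ind (x*y))
      = ∫⁻ z in Ioo (0:ℝ) 1, ∫⁻ x in Ioo (0:ℝ) 1,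
          (f₁ x * ENNReal.ofReal x⁻¹) * K (x, z) := by
    rw [setLIntegral_congr_fun measurableSet_Ioo
      (fun x hx => by
        rw [hInner x hx, ← mul_assoc])]
    have hrw : ∀ x : ℝ, (f₁ x * ENNReal.ofReal x⁻¹) * (∫⁻ z in Ioo (0:ℝ) 1, K (x, z))
        = ∫⁻ z in Ioo (0:ℝ) 1, (f₁ x * ENNReal.ofReal x⁻¹) * K (x, z) := by
      intro x
      rw [lintegral_const_mul _
        (show Measurable fun z => K (x, z) from hKm.comp measurable_prodMk_left)]
    rw [lintegral_congr hrw]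
    exact lintegral_lintegral_swap (((hf₁.comp measurable_fst).mul
      ((measurable_fst.inv).ennreal_ofReal)).mul hKm).aemeasurable
  rw [hswap]
  -- Step 4 : evaluate the inner x-integral
  have hEval : ∀ z ∈ Ioo (0:ℝ) 1, (∫⁻ x in Ioo (0:ℝ) 1, (f₁ x * ENNReal.ofReal x⁻¹) * K (x, z))
      = ind z * f₃ z := by
    intro z hz
    have hz0 : 0 < z := hz.1
    have hz1 : z < 1 := hz.2
    have step1 : (∫⁻ x in Ioo (0:ℝ) 1, (f₁ x * ENNReal.ofReal x⁻¹) * K (x, z))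
        = ∫⁻ x in Ioo z 1, (f₁ x * ENNReal.ofReal x⁻¹) * (f₂ (z/x) * ind z) := by
      have hpt : ∀ x ∈ Ioo (0:ℝ) 1, (f₁ x * ENNReal.ofReal x⁻¹) * K (x, z)
          = (Ioo z 1).indicator
              (fun x => (f₁ x * ENNReal.ofReal x⁻¹) * (f₂ (z/x) * ind z)) x := by
        intro x hx
        by_cases h : z < x
        · rw [Set.indicator_of_mem (mem_Ioo.mpr ⟨h, hx.2⟩), hKdef]
          simp only [if_pos h]
        · rw [Set.indicator_of_notMem
            (show x ∉ Ioo z 1 from fun hmem => h (mem_Ioo.mp hmem).1), hKdef]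
          simp only [if_neg h, mul_zero]
      rw [setLIntegral_congr_fun measurableSet_Ioo hpt,
        lintegral_indicator measurableSet_Ioo, Measure.restrict_restrict measurableSet_Ioo,
        Set.inter_eq_left.mpr (fun x hx => mem_Ioo.mpr
          ⟨hz0.trans (mem_Ioo.mp hx).1, (mem_Ioo.mp hx).2⟩)]
    have step2 : ∫⁻ x in Ioo z 1, (f₁ x * ENNReal.ofReal x⁻¹) * (f₂ (z/x) * ind z)
        = (ENNReal.ofReal (Real.Gamma (a + b) / (Real.Gamma a * Real.Gamma b) *
            (Real.Gamma (c + (a - c)) / (Real.Gamma c * Real.Gamma (a - c))) * z^(c-1)) * ind z) *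
          ∫⁻ x in Ioo z 1, ENNReal.ofReal ((x-z)^(a-c-1) * (1-x)^(b-1)) := by
      rw [← lintegral_const_mul _ (by fun_prop : Measurable fun x : ℝ =>
        ENNReal.ofReal ((x-z)^(a-c-1) * (1-x)^(b-1)))]
      apply setLIntegral_congr_fun measurableSet_Ioo
      intro x hx
      beta_reduce
      have hx0 : 0 < x := hz0.trans hx.1
      have h1x : 0 ≤ 1 - x := by linarith [hx.2]
      have h2x : 0 ≤ 1 - z/x := by
        have hle : z/x ≤ 1 := (div_le_one hx0).mpr hx.1.le
        linarith
      have e : f₁ x * ENNReal.ofReal x⁻¹ * (f₂ (z/x) * ind z)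
          = ENNReal.ofReal ((Real.Gamma (a + b) / (Real.Gamma a * Real.Gamma b) *
              x ^ (a - 1) * (1 - x) ^ (b - 1)) * x⁻¹ *
              (Real.Gamma (c + (a - c)) / (Real.Gamma c * Real.Gamma (a - c)) *
                (z/x) ^ (c - 1) * (1 - (z/x)) ^ (a - c - 1))) * ind z := by
        have hA : 0 ≤ Real.Gamma (a + b) / (Real.Gamma a * Real.Gamma b) *
            x ^ (a - 1) * (1 - x) ^ (b - 1) := by positivity
        have hAx : 0 ≤ Real.Gamma (a + b) / (Real.Gamma a * Real.Gamma b) *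
            x ^ (a - 1) * (1 - x) ^ (b - 1) * x⁻¹ := by positivity
        simp only [hf₁def, hf₂def]
        rw [ENNReal.ofReal_mul hAx, ENNReal.ofReal_mul hA]
        ring
      rw [e, rpow_algebra _ _ a b c x z hz0 hx.1 hx.2,
        ENNReal.ofReal_mul (by positivity)]
      ring
    have step3 : ∫⁻ x in Ioo z 1, ENNReal.ofReal ((x-z)^(a-c-1) * (1-x)^(b-1))
        = ENNReal.ofReal ((1-z)^(a-c+b-1) *
            (Real.Gamma (a-c) * Real.Gamma b / Real.Gamma (a-c+b))) := by
      have := beta_lintegral_shifted (a-c) b z hac hb hz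
      simpa using this
    rw [step1, step2, step3]
    have hGamma : (Real.Gamma (a + b) / (Real.Gamma a * Real.Gamma b) *
        (Real.Gamma (c + (a - c)) / (Real.Gamma c * Real.Gamma (a - c))) * z^(c-1)) *
        ((1-z)^(a-c+b-1) * (Real.Gamma (a-c) * Real.Gamma b / Real.Gamma (a-c+b)))
        = Real.Gamma (c + (a + b - c)) / (Real.Gamma c * Real.Gamma (a + b - c)) *
          z ^ (c - 1) * (1 - z) ^ (a + b - c - 1) := by
      rw [show c + (a - c) = a by ring, show a - c + b = a + b - c by ring,
        show c + (a + b - c) = a + b by ring]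
      field_simp
    calc ENNReal.ofReal (Real.Gamma (a + b) / (Real.Gamma a * Real.Gamma b) *
          (Real.Gamma (c + (a - c)) / (Real.Gamma c * Real.Gamma (a - c))) * z^(c-1)) * ind z *
          ENNReal.ofReal ((1-z)^(a-c+b-1) *
            (Real.Gamma (a-c) * Real.Gamma b / Real.Gamma (a-c+b)))
        = ind z * (ENNReal.ofReal (Real.Gamma (a + b) / (Real.Gamma a * Real.Gamma b) *
            (Real.Gamma (c + (a - c)) / (Real.Gamma c * Real.Gamma (a - c))) * z^(c-1)) *
          ENNReal.ofReal ((1-z)^(a-c+b-1) *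
            (Real.Gamma (a-c) * Real.Gamma b / Real.Gamma (a-c+b)))) := by ring
      _ = ind z * ENNReal.ofReal (Real.Gamma (a + b) / (Real.Gamma a * Real.Gamma b) *
            (Real.Gamma (c + (a - c)) / (Real.Gamma c * Real.Gamma (a - c))) * z^(c-1) *
            ((1-z)^(a-c+b-1) *
              (Real.Gamma (a-c) * Real.Gamma b / Real.Gamma (a-c+b)))) := by
          rw [← ENNReal.ofReal_mul (by positivity)]
      _ = ind z * f₃ z := by rw [hGamma, hf₃def]
  rw [setLIntegral_congr_fun measurableSet_Ioo hEval]
  -- Step 5 : identify with the beta measure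
  have hRHS : _root_.betaMeasure c (a + b - c) s = ∫⁻ z in Ioo (0:ℝ) 1, ind z * f₃ z := by
    rw [show _root_.betaMeasure c (a + b - c)
        = (volume.restrict (Ioo (0:ℝ) 1)).withDensity f₃ from rfl,
      withDensity_apply _ hs, ← lintegral_indicator hs]
    apply lintegral_congr
    intro z
    by_cases h : z ∈ s <;> simp [hinddef, h, Set.indicator_apply]
  rw [hRHS]
end

section
/- Let η_k and η_{k+1} be independent Gamma random variables with parameters k/2 and (k+1)/2 respectively, and set R_k = η_k/η_{k+1}. Then for every k ≥ 1 and every ρ ∈ [0,1], P(R_k > 1 + ρ) ≤ (1 - ρ²/(2+ρ)²)^{k/2}. -/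
open MeasureTheory ProbabilityTheory Real Set
open scoped ENNReal

lemma gamma_laplace' {a c : ℝ} (ha : 0 < a) (hc : c < 1) :
    ∫⁻ x, ENNReal.ofReal (Real.exp (c * x)) ∂(gammaMeasure a 1) =
      ENNReal.ofReal ((1 - c) ^ (-a)) := by
  have h1c : (0:ℝ) < 1 - c := by linarith
  have hpdfm : Measurable (gammaPDF a 1) := (measurable_gammaPDFReal a 1).ennreal_ofReal
  rw [gammaMeasure, lintegral_withDensity_eq_lintegral_mul _ hpdfm (by fun_prop)]
  have key : ∀ x : ℝ, (gammaPDF a 1 * fun x => ENNReal.ofReal (Real.exp (c * x))) x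
      = ENNReal.ofReal ((1 - c) ^ (-a)) * gammaPDF a (1 - c) x := by
    intro x
    rcases lt_or_ge x 0 with hx | hx
    · simp [gammaPDF_of_neg hx]
    · simp only [Pi.mul_apply, gammaPDF_of_nonneg hx]
      rw [← ENNReal.ofReal_mul (by positivity), ← ENNReal.ofReal_mul (by positivity)]
      congr 1
      rw [Real.one_rpow]
      have e1 : Real.exp (-(1 * x)) * Real.exp (c * x) = Real.exp (-((1 - c) * x)) := by
        rw [← Real.exp_add]; ring_nf
      have e2 : (1 - c) ^ (-a) * (1 - c) ^ a = 1 := by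
        rw [← Real.rpow_add h1c]; simp
      linear_combination (x ^ (a - 1) / Real.Gamma a) * e1 -
        (x ^ (a - 1) * Real.exp (-((1 - c) * x)) / Real.Gamma a) * e2
  have hpdfm2 : Measurable (gammaPDF a (1 - c)) := (measurable_gammaPDFReal a (1 - c)).ennreal_ofReal
  simp only [key]
  rw [lintegral_const_mul _ hpdfm2,
    lintegral_gammaPDF_eq_one ha h1c, mul_one]

theorem ratio_upper_deviation {Ω : Type*} [MeasurableSpace Ω] (μ : Measure Ω)
    [IsProbabilityMeasure μ] (k : ℕ) (hk : 1 ≤ k) (ρ : ℝ) (hρ : ρ ∈ Set.Icc (0 : ℝ) 1)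
    (η η' : Ω → ℝ) (hηm : Measurable η) (hη'm : Measurable η')
    (hηlaw : μ.map η = gammaMeasure ((k : ℝ) / 2) 1)
    (hη'law : μ.map η' = gammaMeasure (((k : ℝ) + 1) / 2) 1)
    (hindep : IndepFun η η' μ) :
    μ {ω | 1 + ρ < η ω / η' ω} ≤
      ENNReal.ofReal ((1 - ρ ^ 2 / (2 + ρ) ^ 2) ^ ((k : ℝ) / 2)) := by
  obtain ⟨hρ0, hρ1⟩ := hρ
  have h1ρ : (0:ℝ) < 1 + ρ := by linarith
  set θ : ℝ := ρ / (2 * (1 + ρ)) with hθdef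
  have hθ0 : 0 ≤ θ := by positivity
  have hθ1 : θ < 1 := by
    rw [hθdef, div_lt_one (by linarith)]; linarith
  have hθρ : θ * (1 + ρ) = ρ / 2 := by
    rw [hθdef]; field_simp
  set f : Ω → ℝ≥0∞ := fun ω => ENNReal.ofReal (Real.exp (θ * η ω)) with hf
  set g : Ω → ℝ≥0∞ := fun ω => ENNReal.ofReal (Real.exp (-(ρ / 2) * η' ω)) with hg
  have hfm : Measurable f := (hηm.const_mul θ).exp.ennreal_ofReal
  have hgm : Measurable g := (hη'm.const_mul (-(ρ / 2))).exp.ennreal_ofReal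
  -- null set where η' ≤ 0
  have hns : μ {ω | η' ω ≤ 0} = 0 := by
    have : {ω | η' ω ≤ 0} = η' ⁻¹' Iic 0 := rfl
    rw [this, ← Measure.map_apply hη'm measurableSet_Iic, hη'law, gammaMeasure,
      withDensity_apply _ measurableSet_Iic,
      ← setLIntegral_congr (Iio_ae_eq_Iic (a := (0:ℝ)))]
    exact lintegral_gammaPDF_of_nonpos le_rfl
  -- inclusion
  have hsub : {ω | 1 + ρ < η ω / η' ω} ⊆ {ω | 1 ≤ f ω * g ω} ∪ {ω | η' ω ≤ 0} := by
    intro ω hω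
    by_cases h0 : η' ω ≤ 0
    · exact Or.inr h0
    push_neg at h0
    left
    have hlt : (1 + ρ) * η' ω < η ω := (lt_div_iff₀ h0).mp hω
    have h1 : (ρ / 2) * η' ω ≤ θ * η ω := by
      calc (ρ / 2) * η' ω = θ * ((1 + ρ) * η' ω) := by rw [← hθρ]; ring
        _ ≤ θ * η ω := mul_le_mul_of_nonneg_left hlt.le hθ0
    have : (1:ℝ) ≤ Real.exp (θ * η ω) * Real.exp (-(ρ / 2) * η' ω) := by
      rw [← Real.exp_add, ← Real.exp_zero]
      exact Real.exp_le_exp.mpr (by linarith)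
    simp only [hf, hg, mem_setOf_eq, ← ENNReal.ofReal_mul (Real.exp_nonneg _)]
    calc (1:ℝ≥0∞) = ENNReal.ofReal 1 := by simp
      _ ≤ _ := ENNReal.ofReal_le_ofReal this
  -- per-factor Laplace transforms
  have hka : (0:ℝ) < (k:ℝ) / 2 := by
    have : (1:ℝ) ≤ (k:ℝ) := by exact_mod_cast hk
    linarith
  have hIf : ∫⁻ ω, f ω ∂μ = ENNReal.ofReal ((1 - θ) ^ (-((k:ℝ) / 2))) := by
    have h := lintegral_map (f := fun x => ENNReal.ofReal (Real.exp (θ * x))) (g := η) (μ := μ)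
      ((measurable_const.mul measurable_id).exp.ennreal_ofReal) hηm
    simp only [hf]
    rw [← h, hηlaw, gamma_laplace' hka hθ1]
  have hIg : ∫⁻ ω, g ω ∂μ =
      ENNReal.ofReal ((1 + ρ / 2) ^ (-(((k:ℝ) + 1) / 2))) := by
    have h := lintegral_map (f := fun x => ENNReal.ofReal (Real.exp (-(ρ / 2) * x))) (g := η') (μ := μ)
      ((measurable_const.mul measurable_id).exp.ennreal_ofReal) hη'm
    simp only [hg]
    rw [← h, hη'law, gamma_laplace' (by linarith) (show -(ρ / 2) < 1 by linarith)]
    norm_num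
  -- independence factorization
  have hind2 : IndepFun f g μ :=
    hindep.comp (measurable_const.mul measurable_id).exp.ennreal_ofReal
      (measurable_const.mul measurable_id).exp.ennreal_ofReal
  -- real algebra
  have hbase : (0:ℝ) < 1 - ρ ^ 2 / (2 + ρ) ^ 2 := by
    rw [sub_pos, div_lt_one (by positivity)]
    nlinarith
  have halg : (1 - θ) ^ (-((k:ℝ) / 2)) * (1 + ρ / 2) ^ (-(((k:ℝ) + 1) / 2)) ≤
      (1 - ρ ^ 2 / (2 + ρ) ^ 2) ^ ((k:ℝ) / 2) := by
    have h1θ : (0:ℝ) < 1 - θ := by linarith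
    have hb2 : (1:ℝ) ≤ 1 + ρ / 2 := by linarith
    have hB : (1 + ρ / 2) ^ (-(((k:ℝ) + 1) / 2)) ≤ (1 + ρ / 2) ^ (-((k:ℝ) / 2)) :=
      Real.rpow_le_rpow_of_exponent_le hb2 (by linarith)
    calc (1 - θ) ^ (-((k:ℝ) / 2)) * (1 + ρ / 2) ^ (-(((k:ℝ) + 1) / 2))
        ≤ (1 - θ) ^ (-((k:ℝ) / 2)) * (1 + ρ / 2) ^ (-((k:ℝ) / 2)) :=
          mul_le_mul_of_nonneg_left hB (Real.rpow_nonneg h1θ.le _)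
      _ = ((1 - θ) * (1 + ρ / 2)) ^ (-((k:ℝ) / 2)) :=
          (Real.mul_rpow h1θ.le (by linarith)).symm
      _ = (1 - ρ ^ 2 / (2 + ρ) ^ 2) ^ ((k:ℝ) / 2) := by
          have hmul : (1 - θ) * (1 + ρ / 2) = (1 - ρ ^ 2 / (2 + ρ) ^ 2)⁻¹ := by
            refine eq_inv_of_mul_eq_one_left ?_
            have h4 : (1:ℝ) + ρ ≠ 0 := by positivity
            have h2 : (2:ℝ) + ρ ≠ 0 := by positivity
            rw [hθdef]
            field_simp
            ring
          rw [hmul, Real.inv_rpow hbase.le, Real.rpow_neg hbase.le, inv_inv]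
  -- chain
  calc μ {ω | 1 + ρ < η ω / η' ω}
      ≤ μ ({ω | 1 ≤ f ω * g ω} ∪ {ω | η' ω ≤ 0}) := measure_mono hsub
    _ ≤ μ {ω | 1 ≤ f ω * g ω} + μ {ω | η' ω ≤ 0} := measure_union_le _ _
    _ = μ {ω | 1 ≤ f ω * g ω} := by rw [hns, add_zero]
    _ ≤ ∫⁻ ω, f ω * g ω ∂μ := by
        simpa using mul_meas_ge_le_lintegral₀ ((hfm.mul hgm).aemeasurable) 1
    _ = (∫⁻ ω, f ω ∂μ) * ∫⁻ ω, g ω ∂μ :=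
        lintegral_mul_eq_lintegral_mul_lintegral_of_indepFun hfm hgm hind2
    _ ≤ ENNReal.ofReal ((1 - ρ ^ 2 / (2 + ρ) ^ 2) ^ ((k : ℝ) / 2)) := by
        rw [hIf, hIg, ← ENNReal.ofReal_mul (Real.rpow_nonneg (by linarith) _)]
        exact ENNReal.ofReal_le_ofReal halg
end

section
/- Let η_k and η_{k+1} be independent Gamma random variables with parameters k/2 and (k+1)/2 respectively, and set R_k = η_k/η_{k+1}. Then for every k ≥ 1 and every ρ ∈ [0,1], P(R_k < 1 - ρ) ≤ √2 · (1 - ρ²/(2+ρ)²)^{k/2}. -/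
open MeasureTheory ProbabilityTheory Real Set
open scoped ENNReal NNReal

lemma gamma_exp_lintegral {a t : ℝ} (ha : 0 < a) (ht : t < 1) :
    ∫⁻ x, ENNReal.ofReal (Real.exp (t * x)) ∂(gammaMeasure a 1)
      = ENNReal.ofReal ((1 - t) ^ (-a : ℝ)) := by
  have h1t : (0:ℝ) < 1 - t := by linarith
  rw [gammaMeasure, lintegral_withDensity_eq_lintegral_mul _
    ((show Measurable (gammaPDF a 1) from (measurable_gammaPDFReal a 1).ennreal_ofReal)) (by fun_prop)]
  have key : ∀ x : ℝ, (gammaPDF a 1 * fun x => ENNReal.ofReal (Real.exp (t * x))) x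
      = ENNReal.ofReal ((1 - t) ^ (-a : ℝ)) * gammaPDF a (1 - t) x := by
    intro x
    rcases lt_or_ge x 0 with hx | hx
    · simp [gammaPDF_of_neg hx]
    · simp only [Pi.mul_apply, gammaPDF_of_nonneg hx]
      rw [← ENNReal.ofReal_mul (by positivity), ← ENNReal.ofReal_mul (by positivity)]
      congr 1
      have he : Real.exp (-(1 * x)) * Real.exp (t * x) = Real.exp (-((1 - t) * x)) := by
        rw [← Real.exp_add]; ring_nf
      have hcancel : (1 - t) ^ (-a : ℝ) * (1 - t) ^ (a : ℝ) = 1 := by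
        rw [← Real.rpow_add h1t]; simp
      calc (1:ℝ) ^ (a:ℝ) / Real.Gamma a * x ^ (a - 1) * Real.exp (-(1 * x)) * Real.exp (t * x)
          = ((1 - t) ^ (-a : ℝ) * (1 - t) ^ (a : ℝ)) / Real.Gamma a * x ^ (a - 1) *
            (Real.exp (-(1 * x)) * Real.exp (t * x)) := by rw [hcancel]; simp [one_rpow]; ring
        _ = (1 - t) ^ (-a : ℝ) * ((1 - t) ^ (a:ℝ) / Real.Gamma a * x ^ (a - 1) *
            Real.exp (-((1 - t) * x))) := by rw [he]; ring
  simp_rw [key]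
  rw [lintegral_const_mul _ ((show Measurable (gammaPDF a (1 - t)) from (measurable_gammaPDFReal a (1 - t)).ennreal_ofReal)),
    lintegral_gammaPDF_eq_one ha h1t, mul_one]

lemma numeric_bound (k : ℕ) (ρ : ℝ) (h0 : 0 ≤ ρ) (h1 : ρ ≤ 1) :
    (1 - ρ/2*(1-ρ)) ^ (-(((k:ℝ)+1)/2)) * (1 + ρ/2) ^ (-((k:ℝ)/2))
      ≤ Real.sqrt 2 * (1 - ρ^2/(2+ρ)^2) ^ ((k:ℝ)/2) := by
  set B : ℝ := 1 - ρ/2*(1-ρ) with hBdef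
  set A : ℝ := 1 + ρ/2 with hAdef
  set C : ℝ := 1 - ρ^2/(2+ρ)^2 with hCdef
  have hB : (1:ℝ)/2 ≤ B := by rw [hBdef]; nlinarith
  have hBpos : (0:ℝ) < B := lt_of_lt_of_le (by norm_num) hB
  have hA : (1:ℝ) ≤ A := by rw [hAdef]; linarith
  have hApos : (0:ℝ) < A := lt_of_lt_of_le one_pos hA
  have h2ρ : (0:ℝ) < (2+ρ)^2 := by positivity
  have hCval : C = (4+4*ρ)/(2+ρ)^2 := by rw [hCdef]; field_simp; ring
  have hCpos : 0 < C := by rw [hCval]; positivity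
  have hBA : 0 < B * A := mul_pos hBpos hApos
  -- split the exponent
  have hsplit : B ^ (-(((k:ℝ)+1)/2)) = B ^ (-(1:ℝ)/2) * B ^ (-((k:ℝ)/2)) := by
    rw [← Real.rpow_add hBpos]; ring_nf
  have hBinv : B⁻¹ ≤ 2 := by
    have h := one_div_le_one_div_of_le (by norm_num : (0:ℝ) < 1/2) hB
    rw [one_div] at h; norm_num at h; linarith
  have hsqrt : B ^ (-(1:ℝ)/2) ≤ Real.sqrt 2 := by
    rw [neg_div, Real.rpow_neg hBpos.le, ← Real.inv_rpow hBpos.le, Real.sqrt_eq_rpow]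
    exact Real.rpow_le_rpow (inv_nonneg.2 hBpos.le) hBinv (by norm_num)
  have hmul : B ^ (-((k:ℝ)/2)) * A ^ (-((k:ℝ)/2)) = ((B*A)⁻¹) ^ ((k:ℝ)/2) := by
    rw [← Real.mul_rpow hBpos.le hApos.le, Real.rpow_neg hBA.le, ← Real.inv_rpow hBA.le]
  have hkey : (B*A)⁻¹ ≤ C := by
    have hone : 1 ≤ C * (B * A) := by
      rw [hCval, div_mul_eq_mul_div, le_div_iff₀ h2ρ, hBdef, hAdef]
      nlinarith [pow_nonneg h0 3, pow_nonneg h0 4]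
    calc (B*A)⁻¹ = 1/(B*A) := (one_div _).symm
      _ ≤ C := by rw [div_le_iff₀ hBA]; linarith
  have hrpow : ((B*A)⁻¹) ^ ((k:ℝ)/2) ≤ C ^ ((k:ℝ)/2) :=
    Real.rpow_le_rpow (inv_nonneg.2 hBA.le) hkey (by positivity)
  calc B ^ (-(((k:ℝ)+1)/2)) * A ^ (-((k:ℝ)/2))
      = B ^ (-(1:ℝ)/2) * (B ^ (-((k:ℝ)/2)) * A ^ (-((k:ℝ)/2))) := by rw [hsplit]; ring
    _ = B ^ (-(1:ℝ)/2) * ((B*A)⁻¹) ^ ((k:ℝ)/2) := by rw [hmul]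
    _ ≤ Real.sqrt 2 * (C ^ ((k:ℝ)/2)) := by
        exact mul_le_mul hsqrt hrpow (Real.rpow_nonneg (inv_nonneg.2 hBA.le) _)
          (Real.sqrt_nonneg 2)

lemma gammaMeasure_Iic_zero (a r : ℝ) : gammaMeasure a r (Iic 0) = 0 := by
  rw [gammaMeasure, withDensity_apply _ measurableSet_Iic,
    lintegral_Iic_eq_lintegral_Iio_add_Icc _ le_rfl,
    lintegral_gammaPDF_of_nonpos le_rfl, zero_add]
  exact setLIntegral_measure_zero _ _ (by simp)

theorem ratio_lower_deviation {Ω : Type*} [MeasurableSpace Ω] (μ : Measure Ω)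
    [IsProbabilityMeasure μ] (k : ℕ) (hk : 1 ≤ k) (ρ : ℝ) (hρ : ρ ∈ Set.Icc (0 : ℝ) 1)
    (η η' : Ω → ℝ) (hηm : Measurable η) (hη'm : Measurable η')
    (hηlaw : μ.map η = gammaMeasure ((k : ℝ) / 2) 1)
    (hη'law : μ.map η' = gammaMeasure (((k : ℝ) + 1) / 2) 1)
    (hindep : IndepFun η η' μ) :
    μ {ω | η ω / η' ω < 1 - ρ} ≤
      ENNReal.ofReal (Real.sqrt 2 * (1 - ρ ^ 2 / (2 + ρ) ^ 2) ^ ((k : ℝ) / 2)) := by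
  obtain ⟨hρ0, hρ1⟩ := hρ
  have hk1 : (1:ℝ) ≤ (k:ℝ) := by exact_mod_cast hk
  set s : ℝ := ρ / 2 with hsdef
  have hs0 : 0 ≤ s := by positivity
  have hshalf : s ≤ 1/2 := by rw [hsdef]; linarith
  -- the two composed functions
  set φ : ℝ → ℝ≥0∞ := fun x => ENNReal.ofReal (Real.exp ((-s) * x)) with hφdef
  set ψ : ℝ → ℝ≥0∞ := fun x => ENNReal.ofReal (Real.exp (s * (1 - ρ) * x)) with hψdef
  have hφm : Measurable φ := ((measurable_id.const_mul (-s)).exp).ennreal_ofReal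
  have hψm : Measurable ψ := ((measurable_id.const_mul (s * (1 - ρ))).exp).ennreal_ofReal
  -- null sets
  have hηnull : μ {ω | η ω ≤ 0} = 0 := by
    have h : {ω | η ω ≤ 0} = η ⁻¹' (Iic 0) := rfl
    rw [h, ← Measure.map_apply hηm measurableSet_Iic, hηlaw, gammaMeasure_Iic_zero]
  have hη'null : μ {ω | η' ω ≤ 0} = 0 := by
    have h : {ω | η' ω ≤ 0} = η' ⁻¹' (Iic 0) := rfl
    rw [h, ← Measure.map_apply hη'm measurableSet_Iic, hη'law, gammaMeasure_Iic_zero]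
  set S := {ω | η ω / η' ω < 1 - ρ} with hSdef
  set T := S ∩ ({ω | 0 < η ω} ∩ {ω | 0 < η' ω}) with hTdef
  have hμS : μ S ≤ μ T := by
    have hsub : S ⊆ T ∪ ({ω | η ω ≤ 0} ∪ {ω | η' ω ≤ 0}) := by
      intro ω hω
      by_cases h1 : 0 < η ω
      · by_cases h2 : 0 < η' ω
        · exact Or.inl ⟨hω, h1, h2⟩
        · exact Or.inr (Or.inr (not_lt.1 h2))
      · exact Or.inr (Or.inl (not_lt.1 h1))
    calc μ S ≤ μ (T ∪ ({ω | η ω ≤ 0} ∪ {ω | η' ω ≤ 0})) := measure_mono hsub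
      _ ≤ μ T + μ ({ω | η ω ≤ 0} ∪ {ω | η' ω ≤ 0}) := measure_union_le _ _
      _ ≤ μ T + (μ {ω | η ω ≤ 0} + μ {ω | η' ω ≤ 0}) := by
          exact add_le_add le_rfl (measure_union_le _ _)
      _ = μ T := by rw [hηnull, hη'null]; simp
  -- pointwise bound on T
  have hT1 : ∀ ω ∈ T, (1:ℝ≥0∞) ≤ φ (η ω) * ψ (η' ω) := by
    rintro ω ⟨hS, h1, h2⟩
    have hlt : η ω < (1 - ρ) * η' ω := by
      rw [Set.mem_setOf_eq, div_lt_iff₀ h2] at hS; linarith [hS]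
    have hexp : (0:ℝ) ≤ (-s) * η ω + s * (1 - ρ) * η' ω := by
      have h3 : (-s) * η ω + s * (1 - ρ) * η' ω = s * ((1 - ρ) * η' ω - η ω) := by ring
      rw [h3]
      exact mul_nonneg hs0 (sub_nonneg.2 hlt.le)
    rw [hφdef, hψdef]
    simp only
    rw [← ENNReal.ofReal_mul (Real.exp_nonneg _), ← Real.exp_add]
    calc (1:ℝ≥0∞) = ENNReal.ofReal (Real.exp 0) := by simp
      _ ≤ _ := ENNReal.ofReal_le_ofReal (Real.exp_le_exp.2 hexp)
  have hTm : MeasurableSet T :=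
    (measurableSet_lt (hηm.div hη'm) measurable_const).inter
      ((measurableSet_lt measurable_const hηm).inter
        (measurableSet_lt measurable_const hη'm))
  -- Markov-type bound
  have hMarkov : μ T ≤ ∫⁻ ω, φ (η ω) * ψ (η' ω) ∂μ := by
    calc μ T = ∫⁻ _ in T, 1 ∂μ := (setLIntegral_one T).symm
      _ ≤ ∫⁻ ω in T, φ (η ω) * ψ (η' ω) ∂μ :=
          setLIntegral_mono ((hφm.comp hηm).mul (hψm.comp hη'm)) hT1
      _ ≤ ∫⁻ ω, φ (η ω) * ψ (η' ω) ∂μ := setLIntegral_le_lintegral _ _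
  -- independence
  have hindep2 : IndepFun (φ ∘ η) (ψ ∘ η') μ := hindep.comp hφm hψm
  have hprod : ∫⁻ ω, φ (η ω) * ψ (η' ω) ∂μ
      = (∫⁻ ω, φ (η ω) ∂μ) * ∫⁻ ω, ψ (η' ω) ∂μ :=
    lintegral_mul_eq_lintegral_mul_lintegral_of_indepFun''
      ((hφm.comp hηm).aemeasurable) ((hψm.comp hη'm).aemeasurable) hindep2
  -- compute the two integrals
  have hka : (0:ℝ) < (k:ℝ)/2 := by linarith
  have hka' : (0:ℝ) < ((k:ℝ)+1)/2 := by linarith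
  have hI1 : ∫⁻ ω, φ (η ω) ∂μ = ENNReal.ofReal ((1 + s) ^ (-((k:ℝ)/2))) := by
    rw [show (∫⁻ ω, φ (η ω) ∂μ) = ∫⁻ x, ENNReal.ofReal (Real.exp ((-s) * x)) ∂(μ.map η) from
      (lintegral_map hφm hηm).symm, hηlaw, gamma_exp_lintegral hka (by linarith : -s < 1)]
    norm_num
  have hI2 : ∫⁻ ω, ψ (η' ω) ∂μ
      = ENNReal.ofReal ((1 - s * (1 - ρ)) ^ (-(((k:ℝ)+1)/2))) := by
    rw [show (∫⁻ ω, ψ (η' ω) ∂μ)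
        = ∫⁻ x, ENNReal.ofReal (Real.exp (s * (1 - ρ) * x)) ∂(μ.map η') from
      (lintegral_map hψm hη'm).symm, hη'law,
      gamma_exp_lintegral hka' (by nlinarith : s * (1 - ρ) < 1)]
  -- combine
  calc μ S ≤ ∫⁻ ω, φ (η ω) * ψ (η' ω) ∂μ := hμS.trans hMarkov
    _ = ENNReal.ofReal ((1 + s) ^ (-((k:ℝ)/2)))
        * ENNReal.ofReal ((1 - s * (1 - ρ)) ^ (-(((k:ℝ)+1)/2))) := by
        rw [hprod, hI1, hI2]
    _ = ENNReal.ofReal ((1 - s * (1 - ρ)) ^ (-(((k:ℝ)+1)/2)) * (1 + s) ^ (-((k:ℝ)/2))) := by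
        rw [← ENNReal.ofReal_mul (Real.rpow_nonneg (by linarith) _), mul_comm]
    _ ≤ ENNReal.ofReal (Real.sqrt 2 * (1 - ρ ^ 2 / (2 + ρ) ^ 2) ^ ((k : ℝ) / 2)) := by
        apply ENNReal.ofReal_le_ofReal
        have := numeric_bound k ρ hρ0 hρ1
        rw [hsdef]
        convert this using 3 <;> ring
end

section
/- Let (η_j)_{j≥1} be independent with η_j ~ Gamma(j/2), R_j = η_j/η_{j+1}, and M^k = inf{R_j : j ≥ k+1}. There exists τ > 0 such that for each k ≥ 0, limsup_{y→1-} e^{τ/(1-y)²} P(M^k ≥ y) < ∞. -/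
open MeasureTheory ProbabilityTheory Real Set Filter

open scoped ENNReal NNReal

namespace InfRatioTailAux

lemma lintegral_rpow_exp {s r : ℝ} (hs : 0 < s) (hr : 0 < r) :
    ∫⁻ x in Ioi (0:ℝ), ENNReal.ofReal (x ^ (s-1) * Real.exp (-(r * x)))
      = ENNReal.ofReal ((1/r) ^ s * Real.Gamma s) := by
  rw [← integral_rpow_mul_exp_neg_mul_Ioi hs hr,
      ← ofReal_integral_eq_lintegral_ofReal]
  · have h := integrableOn_rpow_mul_exp_neg_mul_rpow (s := s - 1) (p := 1) (by linarith) one_pos hr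
    refine h.congr_fun (fun x hx => ?_) measurableSet_Ioi
    beta_reduce; rw [Real.rpow_one, neg_mul]
  · filter_upwards [self_mem_ae_restrict measurableSet_Ioi] with x hx
    have : (0:ℝ) < x := hx
    positivity

lemma Gmid {x : ℝ} (hx : 0 < x) :
    Real.Gamma (x + 1/2) ^ 2 ≤ Real.Gamma x * Real.Gamma (x + 1) := by
  have hc := Real.convexOn_log_Gamma.2 (mem_Ioi.mpr hx) (mem_Ioi.mpr (by linarith : (0:ℝ) < x + 1))
      (by norm_num : (0:ℝ) ≤ 1/2) (by norm_num : (0:ℝ) ≤ 1/2) (by norm_num)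
  have hmid : (1/2 : ℝ) • x + (1/2 : ℝ) • (x+1) = x + 1/2 := by
    rw [smul_eq_mul, smul_eq_mul]; ring
  rw [hmid] at hc
  have hc' : Real.log (Real.Gamma (x+1/2)) ≤
      1/2 * Real.log (Real.Gamma x) + 1/2 * Real.log (Real.Gamma (x+1)) := by
    simpa [Function.comp, smul_eq_mul] using hc
  have h1 : Real.log (Real.Gamma (x+1/2) ^ 2) ≤ Real.log (Real.Gamma x * Real.Gamma (x+1)) := by
    rw [Real.log_pow, Real.log_mul (Real.Gamma_pos_of_pos hx).ne'
      (Real.Gamma_pos_of_pos (by linarith)).ne']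
    push_cast
    linarith
  have h2 : (0:ℝ) < Real.Gamma (x+1/2) ^ 2 := by positivity
  have h3 : (0:ℝ) < Real.Gamma x * Real.Gamma (x+1) :=
    mul_pos (Real.Gamma_pos_of_pos hx) (Real.Gamma_pos_of_pos (by linarith))
  exact (Real.log_le_log_iff h2 h3).mp h1

-- Γ(α+1/2) ≤ √α Γα
lemma G1 {α : ℝ} (hα : 0 < α) :
    Real.Gamma (α + 1/2) ≤ Real.sqrt α * Real.Gamma α := by
  have h := Gmid hα
  rw [Real.Gamma_add_one hα.ne'] at h
  have h2 : Real.Gamma (α + 1/2) ^ 2 ≤ (Real.sqrt α * Real.Gamma α) ^ 2 := by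
    have : (Real.sqrt α * Real.Gamma α) ^ 2 = α * (Real.Gamma α)^2 := by
      rw [mul_pow, Real.sq_sqrt hα.le]
    nlinarith [Real.Gamma_pos_of_pos hα]
  have hA := (Real.Gamma_pos_of_pos (by linarith : (0:ℝ) < α + 1/2)).le
  have hB : 0 ≤ Real.sqrt α * Real.Gamma α := by positivity
  nlinarith
-- α Γα ≤ √(α+1/2) Γ(α+1/2)
lemma G2 {α : ℝ} (hα : 0 < α) :
    α * Real.Gamma α ≤ Real.sqrt (α + 1/2) * Real.Gamma (α + 1/2) := by
  have h := Gmid (by linarith : (0:ℝ) < α + 1/2)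
  have e1 : α + 1/2 + 1/2 = α + 1 := by ring
  have e2 : α + 1/2 + 1 = (α + 1/2) + 1 := by ring
  rw [e1, e2, Real.Gamma_add_one (by positivity : (α+1/2:ℝ) ≠ 0),
    Real.Gamma_add_one hα.ne'] at h
  -- h : Γ(α+1)^2 ≤ Γ(α+1/2) * ((α+1/2) * Γ(α+1/2))  with Γ(α+1)=αΓα
  have h2 : (α * Real.Gamma α) ^ 2 ≤ (Real.sqrt (α+1/2) * Real.Gamma (α+1/2)) ^ 2 := by
    have : (Real.sqrt (α+1/2) * Real.Gamma (α+1/2)) ^ 2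
        = (α+1/2) * (Real.Gamma (α+1/2))^2 := by
      rw [mul_pow, Real.sq_sqrt (by linarith : (0:ℝ) ≤ α + 1/2)]
    nlinarith
  have hA : 0 ≤ α * Real.Gamma α := by positivity
  have hB : 0 ≤ Real.sqrt (α+1/2) * Real.Gamma (α+1/2) := by positivity
  nlinarith

-- real constant inequality for the L² norm
lemma R1 {α : ℝ} (hα : 1 ≤ α) :
    ((Real.Gamma (α + 1/2))⁻¹)^2 * ((1/(2:ℝ)) ^ (2*α) * Real.Gamma (2*α)) 
      ≤ 1 / Real.sqrt α := by
  have hα0 : (0:ℝ) < α := by linarith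
  have hβ0 : (0:ℝ) < α + 1/2 := by linarith
  have dup := Real.Gamma_mul_Gamma_add_half α
  have hpow : ((1:ℝ)/2) ^ (2*α) = (1/2) * (2:ℝ) ^ (1 - 2*α) := by
    rw [one_div, Real.inv_rpow (by norm_num : (0:ℝ) ≤ 2), ← Real.rpow_neg (by norm_num : (0:ℝ) ≤ 2),
      show -(2*α) = (-1) + (1 - 2*α) by ring, Real.rpow_add (by norm_num : (0:ℝ) < 2),
      Real.rpow_neg_one]
  set β := α + 1/2 with hβ
  have hGa := Real.Gamma_pos_of_pos hα0
  have hGb := Real.Gamma_pos_of_pos hβ0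
  have hpi0 : (0:ℝ) < Real.sqrt π := Real.sqrt_pos.mpr Real.pi_pos
  have key : ((Real.Gamma β)⁻¹)^2 * ((1/(2:ℝ)) ^ (2*α) * Real.Gamma (2*α))
      = Real.Gamma α / (2 * Real.sqrt π * Real.Gamma β) := by
    rw [hpow]
    field_simp
    linear_combination -dup
  rw [key]
  have hsqa : 0 < Real.sqrt α := Real.sqrt_pos.mpr hα0
  rw [div_le_div_iff₀ (by positivity) hsqa]
  -- Γα * √α ≤ 1 * (2√π Γβ)
  have hsb : Real.sqrt β ≤ Real.sqrt 2 * Real.sqrt α := by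
    rw [← Real.sqrt_mul (by norm_num : (0:ℝ) ≤ 2) α]
    exact Real.sqrt_le_sqrt (by rw [hβ]; linarith)
  have hpi : (1:ℝ) ≤ Real.sqrt π := by
    nlinarith [Real.sq_sqrt Real.pi_pos.le, Real.sqrt_nonneg π, Real.pi_gt_three]
  have hs2 : Real.sqrt 2 ≤ 2 := by
    nlinarith [Real.sq_sqrt (by norm_num : (0:ℝ) ≤ 2), Real.sqrt_nonneg 2]
  have hg2 := G2 hα0
  have h1 : Real.sqrt α * Real.sqrt α = α := Real.mul_self_sqrt hα0.le
  have step1 : α * Real.Gamma α ≤ Real.sqrt 2 * Real.sqrt α * Real.Gamma β :=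
    le_trans hg2 (mul_le_mul_of_nonneg_right hsb hGb.le)
  nlinarith [mul_pos hsqa hGb, mul_nonneg hsqa.le hGb.le, mul_le_mul_of_nonneg_right hs2 (mul_nonneg hsqa.le hGb.le), mul_le_mul_of_nonneg_right hpi (mul_nonneg hsqa.le hGb.le)]

lemma gammaPDF_meas (a r : ℝ) : Measurable (gammaPDF a r) :=
  (measurable_gammaPDFReal a r).ennreal_ofReal

lemma lintegral_eq_Ioi {F : ℝ → ℝ≥0∞} (hF : ∀ x : ℝ, x < 0 → F x = 0) :
    ∫⁻ x, F x ∂volume = ∫⁻ x in Ioi (0:ℝ), F x ∂volume := by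
  rw [← lintegral_add_compl F measurableSet_Ioi (μ := volume)]
  have h0 : ∫⁻ x in (Ioi (0:ℝ))ᶜ, F x ∂volume = 0 := by
    rw [compl_Ioi, ← setLIntegral_congr (Iio_ae_eq_Iic (a := (0:ℝ)))]
    rw [setLIntegral_congr_fun measurableSet_Iio
      (fun x (hx : x < 0) => hF x hx)]
    simp
  rw [h0, add_zero]

-- the sqrt-moment bound
lemma M1 {α : ℝ} (hα : 1 ≤ α) :
    ∫⁻ x, ENNReal.ofReal (Real.sqrt x) ∂(gammaMeasure α 1)
      ≤ ENNReal.ofReal (Real.sqrt α) := by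
  have hα0 : (0:ℝ) < α := by linarith
  have hGa := Real.Gamma_pos_of_pos hα0
  rw [gammaMeasure, lintegral_withDensity_eq_lintegral_mul volume (gammaPDF_meas α 1)
    (Real.continuous_sqrt.measurable.ennreal_ofReal)]
  rw [lintegral_eq_Ioi (fun x hx => by
    simp [Pi.mul_apply, gammaPDF_of_neg hx])]
  have hcong : ∀ x ∈ Ioi (0:ℝ),
      (gammaPDF α 1 * fun x => ENNReal.ofReal (Real.sqrt x)) x
        = ENNReal.ofReal ((Real.Gamma α)⁻¹) *
            ENNReal.ofReal (x ^ (α + 1/2 - 1) * Real.exp (-(1 * x))) := by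
    intro x hx
    have hx0 : (0:ℝ) < x := hx
    rw [Pi.mul_apply, gammaPDF_of_nonneg hx0.le, ← ENNReal.ofReal_mul (by positivity),
      ← ENNReal.ofReal_mul (by positivity)]
    congr 1
    rw [Real.one_rpow, Real.sqrt_eq_rpow, one_mul]
    rw [show x ^ (α + 1/2 - 1) = x ^ (α - 1) * x ^ (1/2 : ℝ) by
      rw [← Real.rpow_add hx0]; ring_nf]
    field_simp
  rw [setLIntegral_congr_fun measurableSet_Ioi hcong,
    lintegral_const_mul' _ _ ENNReal.ofReal_ne_top,
    lintegral_rpow_exp (by linarith : (0:ℝ) < α + 1/2) one_pos]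
  rw [← ENNReal.ofReal_mul (by positivity)]
  apply ENNReal.ofReal_le_ofReal
  have h1 : ((1:ℝ)/1) ^ (α + 1/2) = 1 := by norm_num
  rw [h1, one_mul]
  rw [inv_mul_le_iff₀ hGa, mul_comm]
  exact G1 hα0

lemma J2 {α : ℝ} (hα : 1 ≤ α) :
    ∫⁻ x, (gammaPDF (α+1/2) 1 x) ^ (2:ℝ) ∂volume ≤ ENNReal.ofReal (1/Real.sqrt α) := by
  have hα0 : (0:ℝ) < α := by linarith
  have hβ0 : (0:ℝ) < α + 1/2 := by linarith
  have hGb := Real.Gamma_pos_of_pos hβ0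
  rw [lintegral_eq_Ioi (fun x hx => by
    rw [gammaPDF_of_neg hx, ENNReal.zero_rpow_of_pos (by norm_num)])]
  have hcong : ∀ x ∈ Ioi (0:ℝ),
      (gammaPDF (α+1/2) 1 x) ^ (2:ℝ)
        = ENNReal.ofReal (((Real.Gamma (α+1/2))⁻¹)^2) *
            ENNReal.ofReal (x ^ (2*α - 1) * Real.exp (-(2 * x))) := by
    intro x hx
    have hx0 : (0:ℝ) < x := hx
    rw [gammaPDF_of_nonneg hx0.le,
      ENNReal.ofReal_rpow_of_nonneg (by positivity) (by norm_num),
      ← ENNReal.ofReal_mul (by positivity)]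
    congr 1
    rw [show ((2:ℝ)) = ((2:ℕ):ℝ) by norm_num, Real.rpow_natCast]
    have e1 : (x ^ (α+1/2-1)) * (x ^ (α+1/2-1)) = x ^ (2*α - 1) := by
      rw [← Real.rpow_add hx0]; ring_nf
    have e2 : Real.exp (-(1*x)) * Real.exp (-(1*x)) = Real.exp (-(2*x)) := by
      rw [← Real.exp_add]; ring_nf
    calc (1 ^ (α+1/2) / Real.Gamma (α+1/2) * x ^ (α+1/2-1) * Real.exp (-(1*x)))^2
        = (1 ^ ((α:ℝ)+1/2) / Real.Gamma (α+1/2))^2 *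
            ((x ^ (α+1/2-1)) * (x ^ (α+1/2-1)) *
              (Real.exp (-(1*x)) * Real.exp (-(1*x)))) := by ring
      _ = ((Real.Gamma (α+1/2))⁻¹)^2 * (x ^ (2*α - 1) * Real.exp (-(2*x))) := by
          rw [e1, e2, Real.one_rpow, one_div]
  rw [setLIntegral_congr_fun measurableSet_Ioi hcong,
    lintegral_const_mul' _ _ ENNReal.ofReal_ne_top,
    lintegral_rpow_exp (by linarith : (0:ℝ) < 2*α) (by norm_num : (0:ℝ) < 2),
    ← ENNReal.ofReal_mul (by positivity)]
  exact ENNReal.ofReal_le_ofReal (R1 hα)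

lemma CS_interval {g : ℝ → ℝ≥0∞} (hg : Measurable g) {I : Set ℝ} (hI : MeasurableSet I) :
    ∫⁻ s in I, g s ∂volume
      ≤ (volume I) ^ ((1:ℝ)/2) * (∫⁻ s, (g s) ^ (2:ℝ) ∂volume) ^ ((1:ℝ)/2) := by
  have h1 : ∫⁻ s in I, g s ∂volume = ∫⁻ s, (I.indicator 1) s * g s ∂volume := by
    rw [← lintegral_indicator hI]
    congr 1; ext s
    by_cases hs : s ∈ I <;> simp [Set.indicator_apply, hs]
  rw [h1]
  have h2 := ENNReal.lintegral_mul_le_Lp_mul_Lq volume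
    Real.HolderConjugate.two_two
    ((measurable_one.indicator hI).aemeasurable) hg.aemeasurable
  simp only [Pi.mul_apply] at h2
  refine h2.trans (le_of_eq ?_)
  congr 2
  rw [show ∫⁻ s, (I.indicator (1:ℝ→ℝ≥0∞) s) ^ (2:ℝ) ∂volume
      = ∫⁻ s, I.indicator 1 s ∂volume from by
    congr 1; ext s
    by_cases hs : s ∈ I <;>
      simp [Set.indicator_apply, hs, ENNReal.zero_rpow_of_pos (by norm_num : (0:ℝ) < 2)]]
  exact lintegral_indicator_one hI

-- pointwise density comparison
lemma PW {α : ℝ} (hα : 1 ≤ α) {s t : ℝ} (hst : s < t) :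
    gammaPDF α 1 t * gammaPDF (α+1/2) 1 s ≤ gammaPDF α 1 s * gammaPDF (α+1/2) 1 t := by
  rcases lt_or_ge s 0 with hs | hs
  · rw [gammaPDF_of_neg (a := α+1/2) hs]; simp
  · have ht : (0:ℝ) ≤ t := le_of_lt (lt_of_le_of_lt hs hst)
    rw [gammaPDF_of_nonneg hs, gammaPDF_of_nonneg ht, gammaPDF_of_nonneg hs,
      gammaPDF_of_nonneg ht, ← ENNReal.ofReal_mul (by positivity),
      ← ENNReal.ofReal_mul (by positivity)]
    apply ENNReal.ofReal_le_ofReal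
    have key : t ^ (α-1) * s ^ (α+1/2-1) ≤ s ^ (α-1) * t ^ (α+1/2-1) := by
      rcases eq_or_lt_of_le hs with hs0 | hs0
      · rw [← hs0, Real.zero_rpow (by norm_num; linarith : α+1/2-1 ≠ 0)]
        have : (0:ℝ) ≤ (0:ℝ) ^ (α-1) * t ^ (α+1/2-1) := by positivity
        simpa using this
      · have e1 : s ^ (α+1/2-1) = s ^ (α-1) * s ^ ((1:ℝ)/2) := by
          rw [← Real.rpow_add hs0]; ring_nf
        have e2 : t ^ (α+1/2-1) = t ^ (α-1) * t ^ ((1:ℝ)/2) := by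
          rw [← Real.rpow_add (lt_trans hs0 hst)]; ring_nf
        rw [e1, e2]
        have h12 : s ^ ((1:ℝ)/2) ≤ t ^ ((1:ℝ)/2) :=
          Real.rpow_le_rpow hs0.le hst.le (by norm_num)
        calc t ^ (α-1) * (s ^ (α-1) * s ^ ((1:ℝ)/2))
            = (t ^ (α-1) * s ^ (α-1)) * s ^ ((1:ℝ)/2) := by ring
          _ ≤ (t ^ (α-1) * s ^ (α-1)) * t ^ ((1:ℝ)/2) := by
              apply mul_le_mul_of_nonneg_left h12 (by positivity)
          _ = s ^ (α-1) * (t ^ (α-1) * t ^ ((1:ℝ)/2)) := by ring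
    calc 1 ^ α / Real.Gamma α * t ^ (α-1) * Real.exp (-(1*t)) *
          (1 ^ (α+1/2) / Real.Gamma (α+1/2) * s ^ (α+1/2-1) * Real.exp (-(1*s)))
        = (1 ^ α / Real.Gamma α * (1 ^ ((α:ℝ)+1/2) / Real.Gamma (α+1/2)) *
            (Real.exp (-(1*t)) * Real.exp (-(1*s)))) * (t ^ (α-1) * s ^ (α+1/2-1)) := by ring
      _ ≤ (1 ^ α / Real.Gamma α * (1 ^ ((α:ℝ)+1/2) / Real.Gamma (α+1/2)) *
            (Real.exp (-(1*t)) * Real.exp (-(1*s)))) * (s ^ (α-1) * t ^ (α+1/2-1)) := by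
          apply mul_le_mul_of_nonneg_left key
          have h1 := Real.Gamma_pos_of_pos (by linarith : (0:ℝ) < α)
          have h2 := Real.Gamma_pos_of_pos (by linarith : (0:ℝ) < α+1/2)
          positivity
      _ = 1 ^ α / Real.Gamma α * s ^ (α-1) * Real.exp (-(1*s)) *
          (1 ^ (α+1/2) / Real.Gamma (α+1/2) * t ^ (α+1/2-1) * Real.exp (-(1*t))) := by ring

lemma swap_le {α : ℝ} (hα : 1 ≤ α) :
    ((gammaMeasure α 1).prod (gammaMeasure (α+1/2) 1)) {p : ℝ × ℝ | p.2 ≤ p.1}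
      ≤ ENNReal.ofReal (1/2) := by
  have hα0 : (0:ℝ) < α := by linarith
  have hβ0 : (0:ℝ) < α + 1/2 := by linarith
  have iν : IsProbabilityMeasure (gammaMeasure α 1) := isProbabilityMeasure_gammaMeasure hα0 one_pos
  have iν' : IsProbabilityMeasure (gammaMeasure (α+1/2) 1) :=
    isProbabilityMeasure_gammaMeasure hβ0 one_pos
  set ν := gammaMeasure α 1 with hν
  set ν' := gammaMeasure (α+1/2) 1 with hν'
  set Pm := ν.prod ν' with hPm
  have iPm : IsProbabilityMeasure Pm := by rw [hPm]; infer_instance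
  have hD : MeasurableSet {p : ℝ × ℝ | p.2 ≤ p.1} :=
    measurableSet_le measurable_snd measurable_fst
  -- diagonal is null
  have hdiag : Pm {p : ℝ × ℝ | p.2 = p.1} = 0 := by
    rw [hPm, Measure.prod_apply (measurableSet_eq_fun measurable_snd measurable_fst)]
    have hsing : ∀ t : ℝ, ν' {t} = 0 := fun t => by
      rw [hν', gammaMeasure]
      exact withDensity_absolutelyContinuous volume _ (measure_singleton t)
    have : ∀ t : ℝ, ν' (Prod.mk t ⁻¹' {p : ℝ × ℝ | p.2 = p.1}) = 0 := by
      intro t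
      have he : (Prod.mk t ⁻¹' {p : ℝ × ℝ | p.2 = p.1}) = {t} := by
        ext s; simp [eq_comm]
      rw [he]; exact hsing t
    simp [this, hsing]
  -- strict inequality swap
  have hlt : Pm {p : ℝ × ℝ | p.2 < p.1} ≤ Pm {p : ℝ × ℝ | p.1 < p.2} := by
    have hmf := gammaPDF_meas α 1
    have hmg := gammaPDF_meas (α+1/2) 1
    have e1 : Pm {p : ℝ × ℝ | p.2 < p.1}
        = ∫⁻ t, ∫⁻ s, (if s < t then gammaPDF α 1 t * gammaPDF (α+1/2) 1 s else 0)
            ∂volume ∂volume := by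
      rw [hPm, Measure.prod_apply (measurableSet_lt measurable_snd measurable_fst)]
      have h1 : ∀ t : ℝ, (Prod.mk t ⁻¹' {p : ℝ × ℝ | p.2 < p.1}) = Iio t := by
        intro t; ext s; simp
      simp_rw [h1]
      have hmono : Monotone (fun t : ℝ => ν' (Iio t)) :=
        fun a b hab => measure_mono (Iio_subset_Iio hab)
      rw [hν, gammaMeasure,
        lintegral_withDensity_eq_lintegral_mul volume hmf hmono.measurable]
      congr 1; ext t
      rw [Pi.mul_apply, hν', gammaMeasure, withDensity_apply _ measurableSet_Iio,
        ← lintegral_indicator measurableSet_Iio, ← lintegral_const_mul _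
          (hmg.indicator measurableSet_Iio)]
      congr 1; ext s
      by_cases hs : s < t <;> simp [Set.indicator_apply, hs]
    have e2 : Pm {p : ℝ × ℝ | p.1 < p.2}
        = ∫⁻ t, ∫⁻ s, (if t < s then gammaPDF α 1 t * gammaPDF (α+1/2) 1 s else 0)
            ∂volume ∂volume := by
      rw [hPm, Measure.prod_apply (measurableSet_lt measurable_fst measurable_snd)]
      have h1 : ∀ t : ℝ, (Prod.mk t ⁻¹' {p : ℝ × ℝ | p.1 < p.2}) = Ioi t := by
        intro t; ext s; simp
      simp_rw [h1]
      have hmono : Antitone (fun t : ℝ => ν' (Ioi t)) :=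
        fun a b hab => measure_mono (Ioi_subset_Ioi hab)
      rw [hν, gammaMeasure,
        lintegral_withDensity_eq_lintegral_mul volume hmf hmono.measurable]
      congr 1; ext t
      rw [Pi.mul_apply, hν', gammaMeasure, withDensity_apply _ measurableSet_Ioi,
        ← lintegral_indicator measurableSet_Ioi, ← lintegral_const_mul _
          (hmg.indicator measurableSet_Ioi)]
      congr 1; ext s
      by_cases hs : t < s <;> simp [Set.indicator_apply, hs]
    rw [e1, e2]
    have swap : ∫⁻ t, ∫⁻ s, (if s < t then gammaPDF α 1 s * gammaPDF (α+1/2) 1 t else 0)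
          ∂volume ∂volume
        = ∫⁻ t, ∫⁻ s, (if t < s then gammaPDF α 1 t * gammaPDF (α+1/2) 1 s else 0)
            ∂volume ∂volume := by
      apply lintegral_lintegral_swap
      apply Measurable.aemeasurable
      have : Measurable fun p : ℝ × ℝ => gammaPDF α 1 p.2 * gammaPDF (α+1/2) 1 p.1 :=
        (hmf.comp measurable_snd).mul (hmg.comp measurable_fst)
      exact Measurable.ite (measurableSet_lt measurable_snd measurable_fst) this measurable_const
    rw [← swap]
    refine lintegral_mono fun t => lintegral_mono fun s => ?_
    by_cases hs : s < t
    · simpa [hs] using PW hα hs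
    · simp [hs]
  -- combine
  have hsub : {p : ℝ × ℝ | p.2 ≤ p.1} ⊆ {p : ℝ × ℝ | p.2 < p.1} ∪ {p : ℝ × ℝ | p.2 = p.1} := by
    intro p hp; rcases lt_or_eq_of_le (show p.2 ≤ p.1 from hp) with h | h
    · exact Or.inl h
    · exact Or.inr h
  have hle : Pm {p : ℝ × ℝ | p.2 ≤ p.1} ≤ Pm {p : ℝ × ℝ | p.1 < p.2} := by
    calc Pm {p : ℝ × ℝ | p.2 ≤ p.1}
        ≤ Pm ({p : ℝ × ℝ | p.2 < p.1} ∪ {p : ℝ × ℝ | p.2 = p.1}) := measure_mono hsub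
      _ ≤ Pm {p : ℝ × ℝ | p.2 < p.1} + Pm {p : ℝ × ℝ | p.2 = p.1} := measure_union_le _ _
      _ = Pm {p : ℝ × ℝ | p.2 < p.1} := by rw [hdiag, add_zero]
      _ ≤ Pm {p : ℝ × ℝ | p.1 < p.2} := hlt
  have hcompl : {p : ℝ × ℝ | p.1 < p.2} = {p : ℝ × ℝ | p.2 ≤ p.1}ᶜ := by
    ext p; simp [not_le]
  have hsum := measure_add_measure_compl (μ := Pm) hD
  rw [← hcompl] at hsum
  -- to reals
  have hfin1 : Pm {p : ℝ × ℝ | p.2 ≤ p.1} ≠ ⊤ := measure_ne_top Pm _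
  have hfin2 : Pm {p : ℝ × ℝ | p.1 < p.2} ≠ ⊤ := measure_ne_top Pm _
  have hsumR : (Pm {p : ℝ × ℝ | p.2 ≤ p.1}).toReal + (Pm {p : ℝ × ℝ | p.1 < p.2}).toReal
      = 1 := by
    rw [← ENNReal.toReal_add hfin1 hfin2, hsum]; simp
  have hleR : (Pm {p : ℝ × ℝ | p.2 ≤ p.1}).toReal ≤ (Pm {p : ℝ × ℝ | p.1 < p.2}).toReal :=
    ENNReal.toReal_mono hfin2 hle
  have : (Pm {p : ℝ × ℝ | p.2 ≤ p.1}).toReal ≤ 1/2 := by linarith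
  calc Pm {p : ℝ × ℝ | p.2 ≤ p.1} = ENNReal.ofReal (Pm {p : ℝ × ℝ | p.2 ≤ p.1}).toReal :=
        (ENNReal.ofReal_toReal hfin1).symm
    _ ≤ ENNReal.ofReal (1/2) := ENNReal.ofReal_le_ofReal this

lemma strip_le {α y : ℝ} (hα : 1 ≤ α) (hy : 1/2 ≤ y) (hy1 : y < 1) :
    ((gammaMeasure α 1).prod (gammaMeasure (α+1/2) 1))
        {p : ℝ × ℝ | y * p.2 ≤ p.1 ∧ p.1 < p.2}
      ≤ ENNReal.ofReal (Real.sqrt (2*(1-y)) * Real.sqrt (Real.sqrt α)) := by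
  have hα0 : (0:ℝ) < α := by linarith
  have hβ0 : (0:ℝ) < α + 1/2 := by linarith
  have hy0 : (0:ℝ) < y := by linarith
  have iν : IsProbabilityMeasure (gammaMeasure α 1) := isProbabilityMeasure_gammaMeasure hα0 one_pos
  have iν' : IsProbabilityMeasure (gammaMeasure (α+1/2) 1) :=
    isProbabilityMeasure_gammaMeasure hβ0 one_pos
  have hsα1 : (1:ℝ) ≤ Real.sqrt α := by
    nlinarith [Real.sq_sqrt hα0.le, Real.sqrt_nonneg α]
  have hssα1 : (1:ℝ) ≤ Real.sqrt (Real.sqrt α) := by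
    nlinarith [Real.sq_sqrt (Real.sqrt_nonneg α), Real.sqrt_nonneg (Real.sqrt α)]
  set c2 := Real.sqrt ((Real.sqrt α)⁻¹) with hc2
  have hc2' : c2 = (Real.sqrt (Real.sqrt α))⁻¹ := by rw [hc2, Real.sqrt_inv]
  have hmg := gammaPDF_meas (α+1/2) 1
  have hS : MeasurableSet {p : ℝ × ℝ | y * p.2 ≤ p.1 ∧ p.1 < p.2} :=
    (measurableSet_le (measurable_const.mul measurable_snd) measurable_fst).inter
      (measurableSet_lt measurable_fst measurable_snd)
  rw [Measure.prod_apply hS]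
  have hpre : ∀ t : ℝ, (Prod.mk t ⁻¹' {p : ℝ × ℝ | y * p.2 ≤ p.1 ∧ p.1 < p.2})
      ⊆ Ioc t (t/y) := by
    intro t s hs
    obtain ⟨h1, h2⟩ := hs
    exact ⟨h2, (le_div_iff₀ hy0).mpr (by linarith [mul_comm y s])⟩
  have hJ : (∫⁻ s, (gammaPDF (α+1/2) 1 s) ^ (2:ℝ) ∂volume) ^ ((1:ℝ)/2)
      ≤ ENNReal.ofReal c2 := by
    calc (∫⁻ s, (gammaPDF (α+1/2) 1 s) ^ (2:ℝ) ∂volume) ^ ((1:ℝ)/2)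
        ≤ (ENNReal.ofReal (1/Real.sqrt α)) ^ ((1:ℝ)/2) := by
          exact ENNReal.rpow_le_rpow (J2 hα) (by norm_num)
      _ = ENNReal.ofReal c2 := by
          rw [ENNReal.ofReal_rpow_of_nonneg (by positivity) (by norm_num), hc2, one_div,
            ← Real.sqrt_eq_rpow]
  have hbound : ∀ t : ℝ, (gammaMeasure (α+1/2) 1)
        (Prod.mk t ⁻¹' {p : ℝ × ℝ | y * p.2 ≤ p.1 ∧ p.1 < p.2})
      ≤ ENNReal.ofReal (Real.sqrt ((1-y)/y) * c2 * Real.sqrt t) := by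
    intro t
    refine le_trans (measure_mono (hpre t)) ?_
    rcases lt_or_ge t 0 with ht | ht
    · have h1 : t / y ≤ t := by
        rw [div_le_iff₀ hy0]
        nlinarith
      rw [Ioc_eq_empty (by simpa using h1)]
      simp
    · calc (gammaMeasure (α+1/2) 1) (Ioc t (t/y))
          = ∫⁻ s in Ioc t (t/y), gammaPDF (α+1/2) 1 s ∂volume := by
            rw [gammaMeasure, withDensity_apply _ measurableSet_Ioc]
        _ ≤ (volume (Ioc t (t/y))) ^ ((1:ℝ)/2) *
              (∫⁻ s, (gammaPDF (α+1/2) 1 s) ^ (2:ℝ) ∂volume) ^ ((1:ℝ)/2) :=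
            CS_interval hmg measurableSet_Ioc
        _ ≤ (volume (Ioc t (t/y))) ^ ((1:ℝ)/2) * ENNReal.ofReal c2 :=
            mul_le_mul_right hJ _
        _ ≤ ENNReal.ofReal (Real.sqrt ((1-y)/y) * c2 * Real.sqrt t) := by
            rw [Real.volume_Ioc]
            have he : t/y - t = t * ((1-y)/y) := by field_simp
            rw [he, ENNReal.ofReal_rpow_of_nonneg
              (mul_nonneg ht (div_nonneg (by linarith) hy0.le)) (by norm_num),
              ← Real.sqrt_eq_rpow, Real.sqrt_mul ht, ← ENNReal.ofReal_mul (by positivity)]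
            exact ENNReal.ofReal_le_ofReal (le_of_eq (by ring))
  calc ∫⁻ t, (gammaMeasure (α+1/2) 1)
        (Prod.mk t ⁻¹' {p : ℝ × ℝ | y * p.2 ≤ p.1 ∧ p.1 < p.2}) ∂(gammaMeasure α 1)
      ≤ ∫⁻ t, ENNReal.ofReal (Real.sqrt ((1-y)/y) * c2 * Real.sqrt t)
          ∂(gammaMeasure α 1) := lintegral_mono hbound
    _ = ENNReal.ofReal (Real.sqrt ((1-y)/y) * c2) *
          ∫⁻ t, ENNReal.ofReal (Real.sqrt t) ∂(gammaMeasure α 1) := by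
        simp_rw [ENNReal.ofReal_mul (by positivity : (0:ℝ) ≤ Real.sqrt ((1-y)/y) * c2)]
        rw [lintegral_const_mul _ Real.continuous_sqrt.measurable.ennreal_ofReal]
    _ ≤ ENNReal.ofReal (Real.sqrt ((1-y)/y) * c2) * ENNReal.ofReal (Real.sqrt α) :=
        mul_le_mul_right (M1 hα) _
    _ = ENNReal.ofReal (Real.sqrt ((1-y)/y) * c2 * Real.sqrt α) :=
        (ENNReal.ofReal_mul (by positivity)).symm
    _ ≤ ENNReal.ofReal (Real.sqrt (2*(1-y)) * Real.sqrt (Real.sqrt α)) := by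
        apply ENNReal.ofReal_le_ofReal
        have hpos : (0:ℝ) < Real.sqrt (Real.sqrt α) := by linarith
        have e : c2 * Real.sqrt α = Real.sqrt (Real.sqrt α) := by
          rw [hc2', inv_mul_eq_iff_eq_mul₀ (ne_of_gt hpos)]
          exact (Real.mul_self_sqrt (Real.sqrt_nonneg α)).symm
        have hsq : Real.sqrt ((1-y)/y) ≤ Real.sqrt (2*(1-y)) := by
          apply Real.sqrt_le_sqrt
          rw [div_le_iff₀ hy0]
          nlinarith
        calc Real.sqrt ((1-y)/y) * c2 * Real.sqrt α
            = Real.sqrt ((1-y)/y) * (c2 * Real.sqrt α) := by ring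
          _ = Real.sqrt ((1-y)/y) * Real.sqrt (Real.sqrt α) := by rw [e]
          _ ≤ Real.sqrt (2*(1-y)) * Real.sqrt (Real.sqrt α) :=
              mul_le_mul_of_nonneg_right hsq (Real.sqrt_nonneg _)

lemma MAIN2 {α y : ℝ} (hα : 1 ≤ α) (hy : 1/2 ≤ y) (hy1 : y < 1)
    (hcond : 2*(1-y)*Real.sqrt α ≤ 1/16) :
    ((gammaMeasure α 1).prod (gammaMeasure (α+1/2) 1)) {p : ℝ × ℝ | y * p.2 ≤ p.1}
      ≤ ENNReal.ofReal (3/4) := by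
  have hsub : {p : ℝ × ℝ | y * p.2 ≤ p.1}
      ⊆ {p : ℝ × ℝ | p.2 ≤ p.1} ∪ {p : ℝ × ℝ | y * p.2 ≤ p.1 ∧ p.1 < p.2} := by
    intro p hp
    rcases lt_or_ge p.1 p.2 with h | h
    · exact Or.inr ⟨hp, h⟩
    · exact Or.inl h
  calc ((gammaMeasure α 1).prod (gammaMeasure (α+1/2) 1)) {p : ℝ × ℝ | y * p.2 ≤ p.1}
      ≤ ((gammaMeasure α 1).prod (gammaMeasure (α+1/2) 1))
          ({p : ℝ × ℝ | p.2 ≤ p.1} ∪ {p : ℝ × ℝ | y * p.2 ≤ p.1 ∧ p.1 < p.2}) :=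
        measure_mono hsub
    _ ≤ ((gammaMeasure α 1).prod (gammaMeasure (α+1/2) 1)) {p : ℝ × ℝ | p.2 ≤ p.1}
          + ((gammaMeasure α 1).prod (gammaMeasure (α+1/2) 1))
              {p : ℝ × ℝ | y * p.2 ≤ p.1 ∧ p.1 < p.2} := measure_union_le _ _
    _ ≤ ENNReal.ofReal (1/2) +
          ENNReal.ofReal (Real.sqrt (2*(1-y)) * Real.sqrt (Real.sqrt α)) :=
        add_le_add (swap_le hα) (strip_le hα hy hy1)
    _ ≤ ENNReal.ofReal (3/4) := by
        rw [← ENNReal.ofReal_add (by norm_num) (by positivity)]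
        apply ENNReal.ofReal_le_ofReal
        have h1 : Real.sqrt (2*(1-y)) * Real.sqrt (Real.sqrt α)
            = Real.sqrt (2*(1-y) * Real.sqrt α) := by
          rw [Real.sqrt_mul (by nlinarith : (0:ℝ) ≤ 2*(1-y))]
        have h2 : Real.sqrt (2*(1-y) * Real.sqrt α) ≤ 1/4 := by
          have := Real.sqrt_le_sqrt hcond
          calc Real.sqrt (2*(1-y) * Real.sqrt α) ≤ Real.sqrt (1/16) := this
            _ = 1/4 := by
              rw [show (1/16 : ℝ) = (1/4)^2 by norm_num, Real.sqrt_sq (by norm_num)]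
        rw [h1]
        linarith

section Assembly
variable {Ω : Type*} [MeasurableSpace Ω] (μ : Measure Ω) [IsProbabilityMeasure μ]
  (η : ℕ → Ω → ℝ) (hηm : ∀ j, Measurable (η j))
  (hindep : iIndepFun η μ)
  (hlaw : ∀ j, 1 ≤ j → μ.map (η j) = gammaMeasure ((j : ℝ) / 2) 1)

include hηm hindep hlaw in
lemma single_bound {j : ℕ} (hj : 2 ≤ j) {y : ℝ} (hy : 1/2 ≤ y) (hy1 : y < 1)
    (hcond : 2*(1-y)*Real.sqrt ((j:ℝ)/2) ≤ 1/16) :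
    μ {ω | y * η (j+1) ω ≤ η j ω} ≤ ENNReal.ofReal (3/4) := by
  have hind : IndepFun (η j) (η (j+1)) μ := hindep.indepFun (show j ≠ j+1 by omega)
  have hmap : μ.map (fun ω => (η j ω, η (j+1) ω))
      = (gammaMeasure ((j:ℝ)/2) 1).prod (gammaMeasure ((j:ℝ)/2 + 1/2) 1) := by
    rw [(indepFun_iff_map_prod_eq_prod_map_map (hηm j).aemeasurable
      (hηm (j+1)).aemeasurable).mp hind, hlaw j (by omega), hlaw (j+1) (by omega)]
    have e : (((j+1 : ℕ)):ℝ)/2 = (j:ℝ)/2 + 1/2 := by push_cast; ring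
    rw [e]
  have hset : MeasurableSet {p : ℝ × ℝ | y * p.2 ≤ p.1} :=
    measurableSet_le (measurable_const.mul measurable_snd) measurable_fst
  have hev : {ω | y * η (j+1) ω ≤ η j ω}
      = (fun ω => (η j ω, η (j+1) ω)) ⁻¹' {p : ℝ × ℝ | y * p.2 ≤ p.1} := rfl
  rw [hev, ← Measure.map_apply ((hηm j).prodMk (hηm (j+1))) hset, hmap]
  have h1 : (1:ℝ) ≤ (j:ℝ)/2 := by
    have : (2:ℝ) ≤ (j:ℝ) := by exact_mod_cast hj
    linarith
  exact MAIN2 h1 hy hy1 hcond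

include hηm hindep in
lemma prod_bound (b : ℕ) (m : ℕ) {y : ℝ}
    (hcond : ∀ i, i < m → μ {ω | y * η (b+2*i+1) ω ≤ η (b+2*i) ω} ≤ ENNReal.ofReal (3/4)) :
    μ (⋂ i ∈ Finset.range m, {ω | y * η (b+2*i+1) ω ≤ η (b+2*i) ω})
      ≤ ENNReal.ofReal (3/4) ^ m := by
  induction m with
  | zero => simp
  | succ m ih =>
    have hsplit : (⋂ i ∈ Finset.range (m+1), {ω | y * η (b+2*i+1) ω ≤ η (b+2*i) ω})
        = {ω | y * η (b+2*m+1) ω ≤ η (b+2*m) ω}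
            ∩ ⋂ i ∈ Finset.range m, {ω | y * η (b+2*i+1) ω ≤ η (b+2*i) ω} := by
      rw [Finset.range_add_one, Finset.set_biInter_insert]
    rw [hsplit]
    set S : Finset ℕ := {b+2*m, b+2*m+1} with hS
    set T : Finset ℕ := Finset.range (b+2*m) with hT
    have hST : Disjoint S T := by
      rw [Finset.disjoint_left]
      intro a ha hb'
      rw [hS, Finset.mem_insert, Finset.mem_singleton] at ha
      rw [hT, Finset.mem_range] at hb'
      omega
    have hIF := hindep.indepFun_finset S T hST hηm
    have hmem1 : (b+2*m) ∈ S := by rw [hS]; simp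
    have hmem2 : (b+2*m+1) ∈ S := by rw [hS]; simp
    have hmemT : ∀ i, i < m → (b+2*i) ∈ T ∧ (b+2*i+1) ∈ T := by
      intro i hi
      constructor <;> (rw [hT, Finset.mem_range]; omega)
    set Bs : Set (↥S → ℝ) :=
      {v | y * v ⟨b+2*m+1, hmem2⟩ ≤ v ⟨b+2*m, hmem1⟩} with hBs
    set Bt : Set (↥T → ℝ) :=
      {v | ∀ i, ∀ h : i < m,
        y * v ⟨b+2*i+1, (hmemT i h).2⟩ ≤ v ⟨b+2*i, (hmemT i h).1⟩} with hBt
    have hBsm : MeasurableSet Bs :=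
      measurableSet_le (measurable_const.mul (measurable_pi_apply _)) (measurable_pi_apply _)
    have hBtm : MeasurableSet Bt := by
      have : Bt = ⋂ i, ⋂ h : i < m,
          {v : ↥T → ℝ |
            y * v ⟨b+2*i+1, (hmemT i h).2⟩ ≤ v ⟨b+2*i, (hmemT i h).1⟩} := by
        ext v; simp [hBt]
      rw [this]
      exact MeasurableSet.iInter fun i => MeasurableSet.iInter fun h =>
        measurableSet_le (measurable_const.mul (measurable_pi_apply _)) (measurable_pi_apply _)
    have he1 : {ω | y * η (b+2*m+1) ω ≤ η (b+2*m) ω}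
        = (fun a (i : ↥S) => η ↑i a) ⁻¹' Bs := rfl
    have he2 : (⋂ i ∈ Finset.range m, {ω | y * η (b+2*i+1) ω ≤ η (b+2*i) ω})
        = (fun a (i : ↥T) => η ↑i a) ⁻¹' Bt := by
      ext ω
      simp only [mem_iInter, Finset.mem_range, mem_preimage, hBt, mem_setOf_eq]
    rw [he1, he2, hIF.measure_inter_preimage_eq_mul _ _ hBsm hBtm, ← he2]
    calc μ ((fun a (i : ↥S) => η ↑i a) ⁻¹' Bs)
          * μ (⋂ i ∈ Finset.range m, {ω | y * η (b+2*i+1) ω ≤ η (b+2*i) ω})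
        ≤ ENNReal.ofReal (3/4) * ENNReal.ofReal (3/4) ^ m := by
          apply mul_le_mul'
          · rw [← he1]; exact hcond m (by omega)
          · exact ih (fun i hi => hcond i (by omega))
      _ = ENNReal.ofReal (3/4) ^ (m+1) := by rw [pow_succ, mul_comm]

include hlaw hηm in
lemma eta_pos_ae {j : ℕ} (hj : 1 ≤ j) : μ {ω | η j ω ≤ 0} = 0 := by
  have : {ω | η j ω ≤ 0} = η j ⁻¹' (Iic 0) := rfl
  rw [this, ← Measure.map_apply (hηm j) measurableSet_Iic, hlaw j hj, gammaMeasure,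
    withDensity_apply _ measurableSet_Iic,
    ← setLIntegral_congr (Iio_ae_eq_Iic (a := (0:ℝ)))]
  exact lintegral_gammaPDF_of_nonpos le_rfl

end Assembly

end InfRatioTailAux

open InfRatioTailAux in
theorem inf_ratio_right_tail {Ω : Type*} [MeasurableSpace Ω] (μ : Measure Ω)
    [IsProbabilityMeasure μ] (η : ℕ → Ω → ℝ) (hηm : ∀ j, Measurable (η j))
    (hindep : iIndepFun η μ)
    (hlaw : ∀ j, 1 ≤ j → μ.map (η j) = gammaMeasure ((j : ℝ) / 2) 1) :
    ∃ τ : ℝ, 0 < τ ∧ ∀ k : ℕ, ∃ C : ℝ,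
      ∀ᶠ y in nhdsWithin 1 (Set.Iio 1),
        Real.exp (τ / (1 - y) ^ 2) *
          (μ {ω | y ≤ ⨅ j : {j : ℕ // k + 1 ≤ j}, η j.1 ω / η (j.1 + 1) ω}).toReal ≤ C := by
  refine ⟨1/32768, by norm_num, fun k => ⟨1, ?_⟩⟩
  set b := k + 2 with hb
  set T₀ : ℝ := max (2048*((b:ℝ)+2)) 8192 with hT0
  have hT0pos : (0:ℝ) < T₀ := lt_of_lt_of_le (by norm_num) (le_max_right _ _)
  set ε : ℝ := min (1/2) (1/Real.sqrt T₀) with hε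
  have hεpos : 0 < ε := lt_min (by norm_num) (by positivity)
  have hmem : Ioo (1-ε) 1 ∈ nhdsWithin (1:ℝ) (Iio 1) :=
    Ioo_mem_nhdsLT_of_mem (by constructor <;> [linarith; exact le_rfl])
  filter_upwards [hmem] with y hyIoo
  obtain ⟨hylb, hy1⟩ := hyIoo
  have hε2 : ε ≤ 1/2 := min_le_left _ _
  have hyhalf : 1/2 ≤ y := by linarith
  set u := 1 - y with hu
  have hu0 : 0 < u := by rw [hu]; linarith
  have huε : u < ε := by rw [hu]; linarith
  set t : ℝ := (u^2)⁻¹ with ht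
  have ht0 : 0 < t := by positivity
  have htT : T₀ ≤ t := by
    have h1 : u < 1/Real.sqrt T₀ := lt_of_lt_of_le huε (min_le_right _ _)
    have h2 : (0:ℝ) < Real.sqrt T₀ := Real.sqrt_pos.mpr hT0pos
    have h3 : u^2 < (1/Real.sqrt T₀)^2 := by nlinarith
    have h4 : (1/Real.sqrt T₀)^2 = 1/T₀ := by
      rw [div_pow, one_pow, Real.sq_sqrt hT0pos.le]
    rw [h4] at h3
    rw [ht]
    calc T₀ = (1/T₀)⁻¹ := by field_simp
      _ ≤ (u^2)⁻¹ := by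
          apply inv_anti₀ (by positivity) h3.le
  have ht8192 : (8192:ℝ) ≤ t := le_trans (le_max_right _ _) htT
  have htb : 2048*((b:ℝ)+2) ≤ t := le_trans (le_max_left _ _) htT
  set m := ⌊t/4096⌋₊ with hm
  have hm1 : (m:ℝ) ≤ t/4096 := Nat.floor_le (by positivity)
  have hm2 : t/4096 - 1 < (m:ℝ) := Nat.sub_one_lt_floor _
  have hbm : (b:ℝ) + 2*(m:ℝ) ≤ t/1024 := by linarith
  have hu2t : u^2 * t = 1 := by rw [ht]; field_simp
  -- per-factor bounds
  have hcond : ∀ i, i < m →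
      μ {ω | y * η (b+2*i+1) ω ≤ η (b+2*i) ω} ≤ ENNReal.ofReal (3/4) := by
    intro i hi
    apply single_bound μ η hηm hindep hlaw (by omega : 2 ≤ b+2*i) hyhalf hy1
    have him : (i:ℝ) ≤ (m:ℝ) := by exact_mod_cast hi.le
    have hbR : (b:ℝ) = (k:ℝ)+1+1 := by rw [hb]; push_cast; ring
    have hj : ((b+2*i : ℕ):ℝ)/2 ≤ t/2048 := by push_cast; linarith [hbm, hbR, him]
    have hjnn : (0:ℝ) ≤ ((b+2*i : ℕ):ℝ)/2 := by positivity
    set a := ((b+2*i : ℕ):ℝ)/2 with ha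
    have h1 : (2*u*Real.sqrt a)^2 = 4*u^2*a := by
      rw [mul_pow, mul_pow, Real.sq_sqrt hjnn]; ring
    have h2 : 4*u^2*a ≤ 4*u^2*(t/2048) :=
      mul_le_mul_of_nonneg_left hj (by positivity)
    have h5 : (2*u*Real.sqrt a)^2 ≤ (1/16:ℝ)^2 := by
      rw [h1]
      have : 4*u^2*(t/2048) = (4/2048) * (u^2*t) := by ring
      rw [this, hu2t] at h2
      norm_num at h2 ⊢
      linarith
    have hnn : (0:ℝ) ≤ 2*u*Real.sqrt a :=
      mul_nonneg (by positivity) (Real.sqrt_nonneg a)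
    have : 2*u*Real.sqrt a ≤ 1/16 := by nlinarith
    calc 2*(1-y)*Real.sqrt (((b+2*i : ℕ):ℝ)/2) = 2*u*Real.sqrt a := by rw [← hu, ha]
      _ ≤ 1/16 := this
  -- inclusion into intersection of pair events
  set G := ⋃ i ∈ Finset.range m, {ω | η (b+2*i+1) ω ≤ 0} with hG'
  have hG : μ G = 0 := by
    rw [hG']
    refine (measure_biUnion_null_iff (Finset.range m).countable_toSet).mpr fun i _ => ?_
    exact eta_pos_ae μ η hηm hlaw (by omega)
  set E := {ω | y ≤ ⨅ j : {j : ℕ // k + 1 ≤ j}, η j.1 ω / η (j.1 + 1) ω} with hE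
  have hincl : E \ G ⊆ ⋂ i ∈ Finset.range m, {ω | y * η (b+2*i+1) ω ≤ η (b+2*i) ω} := by
    intro ω hω
    obtain ⟨hωE, hωG⟩ := hω
    simp only [mem_iInter, Finset.mem_range, mem_setOf_eq]
    intro i hi
    have hpos : 0 < η (b+2*i+1) ω := by
      by_contra hnp
      push_neg at hnp
      exact hωG (Set.mem_biUnion (Finset.mem_range.mpr hi) hnp)
    have hωE' : y ≤ ⨅ j : {j : ℕ // k + 1 ≤ j}, η j.1 ω / η (j.1 + 1) ω := hωE
    have hbdd : BddBelow (range fun j : {j : ℕ // k+1 ≤ j} => η j.1 ω / η (j.1+1) ω) := by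
      by_contra hnb
      rw [Real.iInf_of_not_bddBelow hnb] at hωE'
      linarith
    have hle := ciInf_le hbdd (⟨b+2*i, by omega⟩ : {j : ℕ // k+1 ≤ j})
    exact (le_div_iff₀ hpos).mp (le_trans hωE' hle)
  have hmain : μ E ≤ ENNReal.ofReal (3/4) ^ m := by
    calc μ E ≤ μ ((E \ G) ∪ G) := measure_mono (subset_diff_union E G)
      _ ≤ μ (E \ G) + μ G := measure_union_le _ _
      _ = μ (E \ G) := by rw [hG, add_zero]
      _ ≤ μ (⋂ i ∈ Finset.range m, {ω | y * η (b+2*i+1) ω ≤ η (b+2*i) ω}) :=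
          measure_mono hincl
      _ ≤ _ := prod_bound μ η hηm hindep b m hcond
  -- numeric finish
  have hμr : (μ E).toReal ≤ (3/4:ℝ)^m := by
    have hfin : ENNReal.ofReal (3/4) ^ m ≠ ⊤ :=
      ENNReal.pow_ne_top ENNReal.ofReal_ne_top
    have := ENNReal.toReal_mono hfin hmain
    rwa [ENNReal.toReal_pow, ENNReal.toReal_ofReal (by norm_num)] at this
  have hq : (3/4:ℝ)^m ≤ Real.exp (-(1/4)*(m:ℝ)) := by
    have h34 : (3/4:ℝ) ≤ Real.exp (-(1/4)) := by
      have := Real.add_one_le_exp (-(1/4:ℝ))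
      linarith
    calc (3/4:ℝ)^m ≤ (Real.exp (-(1/4)))^m := pow_le_pow_left₀ (by norm_num) h34 m
      _ = Real.exp (-(1/4)*(m:ℝ)) := by rw [← Real.exp_nat_mul]; ring_nf
  have hτt : (1/32768:ℝ) / (1-y)^2 = (1/32768)*t := by
    rw [ht, ← hu, div_eq_mul_inv]
  have hμnn : (0:ℝ) ≤ (μ E).toReal := ENNReal.toReal_nonneg
  calc Real.exp ((1/32768:ℝ) / (1-y)^2) * (μ E).toReal
      ≤ Real.exp ((1/32768)*t) * (3/4:ℝ)^m := by
        rw [hτt]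
        exact mul_le_mul_of_nonneg_left hμr (Real.exp_pos _).le
    _ ≤ Real.exp ((1/32768)*t) * Real.exp (-(1/4)*(m:ℝ)) :=
        mul_le_mul_of_nonneg_left hq (Real.exp_pos _).le
    _ = Real.exp ((1/32768)*t + -(1/4)*(m:ℝ)) := (Real.exp_add _ _).symm
    _ ≤ Real.exp 0 := Real.exp_le_exp.mpr (by linarith)
    _ = 1 := Real.exp_zero
end
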